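/- arXiv:2008.11066 — 8 statements merged into one kernel-verified Lean document; each statement's English description precedes it below -/
import Mathlib

section
/- Forward modularity of derivations: Let C be an adhesive category, let α : L ⇀ R, β : G ⇀ H, γ : S ⇀ T be rules and let f₁ : L ⟶ S, f₂ : S ⟶ G, g : R ⟶ H, g₁ : R ⟶ T be matches such that (f₂ ∘ f₁) ⇒[α] g with corule β and f₁ ⇒[α] g₁ with corule γ. Then there exists a unique match g₂ : T ⟶ H such that g₂ ∘ g₁ = g and f₂ ⇒[γ] g₂ with corule β. -/
open CategoryTheory Limits

universe v u

variable {C : Type u} [Category.{v} C]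

/-- `IsFPBC f₁ f₂ g₁ g₂` states that `(g₁ : X ⟶ W, g₂ : W ⟶ Z)` is a final pullback
complement of the composable pair `(f₁ : X ⟶ Y, f₂ : Y ⟶ Z)`. -/
structure IsFPBC {X Y Z W : C} (f₁ : X ⟶ Y) (f₂ : Y ⟶ Z) (g₁ : X ⟶ W) (g₂ : W ⟶ Z) :
    Prop where
  isPullback : IsPullback f₁ g₁ f₂ g₂
  final : ∀ {P Q : C} (f₁' : P ⟶ Y) (g₁' : P ⟶ Q) (g₂' : Q ⟶ Z),
      IsPullback f₁' g₁' f₂ g₂' → ∀ p : P ⟶ X, p ≫ f₁ = f₁' →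
      ∃! u : Q ⟶ W, u ≫ g₂ = g₂' ∧ g₁' ≫ u = p ≫ g₁

/-- A rule `L ⇀ R` is a span of monomorphisms. -/
structure Rule (L R : C) where
  K : C
  left : K ⟶ L
  right : K ⟶ R
  mono_left : Mono left
  mono_right : Mono right

/-- The reverse `α† : R ⇀ L` of a rule `α : L ⇀ R`. -/
def Rule.rev {L R : C} (α : Rule L R) : Rule R L :=
  ⟨α.K, α.right, α.left, α.mono_right, α.mono_left⟩

/-- `IsDerivation α f g β`: the comatch `g : R ⟶ H` is derived from the match `f : L ⟶ G`
by the rule `α : L ⇀ R`, with corule `β : G ⇀ H`. -/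
def IsDerivation {L R G H : C} (α : Rule L R) (f : L ⟶ G) (g : R ⟶ H) (β : Rule G H) :
    Prop :=
  ∃ h : α.K ⟶ β.K, Mono h ∧ IsFPBC α.left f h β.left ∧ IsPushout α.right h g β.right

/-- A match `g : R ⟶ H` is derivable by a rule `α : L ⇀ R` if `f ⇒[α] g` for some match `f`. -/
def Derivable {L R H : C} (α : Rule L R) (g : R ⟶ H) : Prop :=
  ∃ (G : C) (f : L ⟶ G) (β : Rule G H), Mono f ∧ IsDerivation α f g β

/-- A gluing of `G₁` and `G₂`: a cospan of monomorphisms. -/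
structure Gluing (G₁ G₂ : C) where
  U : C
  i₁ : G₁ ⟶ U
  i₂ : G₂ ⟶ U
  mono₁ : Mono i₁
  mono₂ : Mono i₂

/-- A gluing is minimal if every monomorphism through which both legs factor is an iso. -/
def Gluing.Minimal {G₁ G₂ : C} (gl : Gluing G₁ G₂) : Prop :=
  ∀ (V : C) (m : V ⟶ gl.U), Mono m →
    (∃ j₁ : G₁ ⟶ V, j₁ ≫ m = gl.i₁) → (∃ j₂ : G₂ ⟶ V, j₂ ≫ m = gl.i₂) → IsIso m

/-- Two gluings are isomorphic if there is an isomorphism of their tips commuting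
with the legs. -/
def GluingIso {G₁ G₂ : C} (g h : Gluing G₁ G₂) : Prop :=
  ∃ u : g.U ≅ h.U, g.i₁ ≫ u.hom = h.i₁ ∧ g.i₂ ≫ u.hom = h.i₂

/-- The set (type) of matches (monomorphisms) from `A` to `B`. -/
abbrev Mchs (A B : C) := {f : A ⟶ B // Mono f}

/-- Composing a pullback square with a mono on the bottom-right yields a pullback square. -/
lemma isPullback_comp_mono' {P X Y Z W : C} {a : P ⟶ X} {b : P ⟶ Y} {f : X ⟶ Z} {g : Y ⟶ Z}
    (h : IsPullback a b f g) (e : Z ⟶ W) [Mono e] :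
    IsPullback a b (f ≫ e) (g ≫ e) := by
  have t : IsPullback g (𝟙 Y) e (g ≫ e) := by
    refine IsPullback.of_isLimit (PullbackCone.IsLimit.mk (by simp)
      (fun s => s.snd) (fun s => ?_) (fun s => by simp) (fun s lift h1 h2 => by simpa using h2)
      : IsLimit (PullbackCone.mk g (𝟙 Y) (by simp)))
    · have hc : s.fst ≫ e = s.snd ≫ (g ≫ e) := s.condition
      rw [← Category.assoc] at hc
      exact ((cancel_mono e).mp hc).symm
  simpa using h.paste_vert t

/-- Forward modularity of derivations. -/
theorem forward_modularity [Adhesive C] {L R S G H T : C}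
    (α : Rule L R) (β : Rule G H) (γ : Rule S T)
    (f₁ : L ⟶ S) (f₂ : S ⟶ G) (g : R ⟶ H) (g₁ : R ⟶ T)
    [Mono f₁] [Mono f₂] [Mono g] [Mono g₁]
    (h1 : IsDerivation α (f₁ ≫ f₂) g β)
    (h2 : IsDerivation α f₁ g₁ γ) :
    ∃! g₂ : T ⟶ H, Mono g₂ ∧ g₁ ≫ g₂ = g ∧ IsDerivation γ f₂ g₂ β := by
  obtain ⟨k, kmono, kfpbc, kpo⟩ := h1
  obtain ⟨m, mmono, mfpbc, mpo⟩ := h2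
  haveI := α.mono_left; haveI := α.mono_right
  haveI := β.mono_left; haveI := β.mono_right
  haveI := γ.mono_left; haveI := γ.mono_right
  haveI := kmono; haveI := mmono
  -- Step A: construct `n : γ.K ⟶ β.K`
  have hsqA : IsPullback α.left m (f₁ ≫ f₂) (γ.left ≫ f₂) :=
    isPullback_comp_mono' mfpbc.isPullback f₂
  obtain ⟨n, ⟨hnβ, hmn⟩, -⟩ := kfpbc.final α.left m (γ.left ≫ f₂) hsqA (𝟙 _) (by simp)
  rw [Category.id_comp] at hmn
  -- hnβ : n ≫ β.left = γ.left ≫ f₂ ; hmn : m ≫ n = k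
  haveI nmono : Mono n := by
    haveI : Mono (n ≫ β.left) := by rw [hnβ]; exact mono_comp _ _
    exact mono_of_mono n β.left
  -- Step B: `(γ.left, n)` is a pullback of `(f₂, β.left)`
  have pbD : IsPullback (pullback.snd β.left f₂) (pullback.fst β.left f₂) f₂ β.left :=
    (IsPullback.of_hasPullback β.left f₂).flip
  set d1 : pullback β.left f₂ ⟶ S := pullback.snd β.left f₂ with hd1
  set d2 : pullback β.left f₂ ⟶ β.K := pullback.fst β.left f₂ with hd2
  have hw : α.left ≫ f₁ ≫ f₂ = k ≫ β.left := kfpbc.isPullback.w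
  let w : α.K ⟶ pullback β.left f₂ := pbD.lift (α.left ≫ f₁) k (by
    rw [Category.assoc]; exact hw)
  have hwd1 : w ≫ d1 = α.left ≫ f₁ := pbD.lift_fst _ _ _
  have hwd2 : w ≫ d2 = k := pbD.lift_snd _ _ _
  have pbLeft : IsPullback α.left w f₁ d1 := by
    refine IsPullback.of_bot ?_ hwd1.symm pbD
    rw [hwd2]; exact kfpbc.isPullback
  obtain ⟨u, ⟨huγ, hwu⟩, -⟩ := mfpbc.final α.left w d1 pbLeft (𝟙 _) (by simp)
  rw [Category.id_comp] at hwu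
  -- huγ : u ≫ γ.left = d1 ; hwu : w ≫ u = m
  let v : γ.K ⟶ pullback β.left f₂ := pbD.lift γ.left n hnβ.symm
  have hvd1 : v ≫ d1 = γ.left := pbD.lift_fst _ _ _
  have hvd2 : v ≫ d2 = n := pbD.lift_snd _ _ _
  have hun : u ≫ n = d2 := by
    rw [← cancel_mono β.left, Category.assoc, hnβ, ← Category.assoc, huγ, pbD.w]
  have hvu : v ≫ u = 𝟙 _ := by
    rw [← cancel_mono γ.left, Category.assoc, huγ, hvd1, Category.id_comp]
  have huv : u ≫ v = 𝟙 _ := by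
    refine pbD.hom_ext ?_ ?_
    · rw [Category.assoc, hvd1, huγ, Category.id_comp]
    · rw [Category.assoc, hvd2, hun, Category.id_comp]
  have pbn : IsPullback γ.left n f₂ β.left := by
    refine pbD.of_iso ⟨u, v, huv, hvu⟩ (Iso.refl _) (Iso.refl _) (Iso.refl _) ?_ ?_ ?_ ?_ <;>
      simp [huγ, hun]
  -- Step C: `(n, β.left)` is an FPBC of `(γ.left, f₂)`
  have fpbc_n : IsFPBC γ.left f₂ n β.left := by
    refine ⟨pbn, ?_⟩
    intro P Q f₁' g₁' g₂' hpb p hp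
    have pbq : IsPullback (pullback.fst f₁ f₁') (pullback.snd f₁ f₁') f₁ f₁' :=
      IsPullback.of_hasPullback f₁ f₁'
    set q₁ := pullback.fst f₁ f₁'
    set q₂ := pullback.snd f₁ f₁'
    have big : IsPullback q₁ (q₂ ≫ g₁') (f₁ ≫ f₂) g₂' := pbq.paste_vert hpb
    let p' : pullback f₁ f₁' ⟶ α.K := mfpbc.isPullback.lift q₁ (q₂ ≫ p) (by
      rw [Category.assoc, hp]; exact pbq.w)
    have hp'1 : p' ≫ α.left = q₁ := mfpbc.isPullback.lift_fst _ _ _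
    have hp'2 : p' ≫ m = q₂ ≫ p := mfpbc.isPullback.lift_snd _ _ _
    obtain ⟨t, ⟨ht1, -⟩, -⟩ := kfpbc.final q₁ (q₂ ≫ g₁') g₂' big p' hp'1
    refine ⟨t, ⟨ht1, ?_⟩, ?_⟩
    · rw [← cancel_mono β.left, Category.assoc, Category.assoc, ht1, hnβ,
        ← Category.assoc, hp, ← hpb.w]
    · rintro t' ⟨ht1', -⟩
      rw [← cancel_mono β.left, ht1, ht1']
  -- Step D: construct `g₂` via the pushout of `h2`
  have wcond : α.right ≫ g = m ≫ n ≫ β.right := by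
    rw [← Category.assoc, hmn]; exact kpo.w
  refine ⟨mpo.desc g (n ≫ β.right) wcond, ⟨?_, mpo.inl_desc _ _ _, n, nmono, fpbc_n, ?_⟩, ?_⟩
  · -- Mono g₂
    have pon : IsPushout γ.right n (mpo.desc g (n ≫ β.right) wcond) β.right := by
      refine IsPushout.of_top ?_ (mpo.inr_desc _ _ _) mpo
      rw [hmn, mpo.inl_desc]; exact kpo
    exact Adhesive.mono_of_isPushout_of_mono_right pon
  · -- IsPushout γ.right n g₂ β.right
    refine IsPushout.of_top ?_ (mpo.inr_desc _ _ _) mpo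
    rw [hmn, mpo.inl_desc]; exact kpo
  · -- uniqueness
    rintro g₂' ⟨mono', hg', n', n'mono, n'fpbc, n'po⟩
    have hn' : n' = n := by
      have hj1 := pbn.lift_fst γ.left n' n'fpbc.isPullback.w
      have hj2 := pbn.lift_snd γ.left n' n'fpbc.isPullback.w
      have : pbn.lift γ.left n' n'fpbc.isPullback.w = 𝟙 _ := by
        rw [← cancel_mono γ.left, hj1, Category.id_comp]
      rw [← hj2, this, Category.id_comp]
    refine mpo.hom_ext ?_ ?_
    · rw [mpo.inl_desc, hg']
    · rw [mpo.inr_desc, n'po.w, hn']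
end

section
/- Backward modularity of derivations: Let C be an adhesive category, let α : L ⇀ R, β : G ⇀ H, γ : S ⇀ T be rules and let f : L ⟶ G, f₁ : L ⟶ S, g₁ : R ⟶ T, g₂ : T ⟶ H be matches such that f ⇒[α] (g₂ ∘ g₁) with corule β and g₁ ⇒[α†] f₁ with corule γ†. Then there exists a unique match f₂ : S ⟶ G such that f₂ ∘ f₁ = f, f₁ ⇒[α] g₁ with corule γ, and f₂ ⇒[γ] g₂ with corule β. -/
open CategoryTheory Limits

universe v u

variable {C : Type u} [Category.{v} C]

/-- Build `IsPullback` from the universal property. -/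
theorem isPullback_of_universal {P X Y Z : C} {fst : P ⟶ X} {snd : P ⟶ Y} {f : X ⟶ Z} {g : Y ⟶ Z}
    (w : fst ≫ f = snd ≫ g)
    (lift : ∀ {W : C} (a : W ⟶ X) (b : W ⟶ Y), a ≫ f = b ≫ g → (W ⟶ P))
    (lift_fst : ∀ {W : C} (a : W ⟶ X) (b : W ⟶ Y) (h : a ≫ f = b ≫ g), lift a b h ≫ fst = a)
    (lift_snd : ∀ {W : C} (a : W ⟶ X) (b : W ⟶ Y) (h : a ≫ f = b ≫ g), lift a b h ≫ snd = b)
    (uniq : ∀ {W : C} (m m' : W ⟶ P), m ≫ fst = m' ≫ fst → m ≫ snd = m' ≫ snd → m = m') :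
    IsPullback fst snd f g :=
  IsPullback.of_isLimit (PullbackCone.IsLimit.mk w (fun s => lift s.fst s.snd s.condition)
    (fun s => lift_fst _ _ _) (fun s => lift_snd _ _ _)
    (fun s m hm1 hm2 => uniq m _ (by rw [hm1, lift_fst]) (by rw [hm2, lift_snd])))

/-- A factorization through a monomorphism gives a pullback square. -/
theorem isPullback_id_of_factor {X Y Z : C} (e : X ⟶ Y) (i : Y ⟶ Z) (j : X ⟶ Z) [Mono i]
    (w : e ≫ i = j) : IsPullback e (𝟙 X) i j := by
  subst w
  refine isPullback_of_universal (by simp) (fun a b h => b)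
    (fun a b h => by rw [← cancel_mono i, Category.assoc]; exact h.symm)
    (fun a b h => by simp)
    (fun m m' h1 h2 => by simpa using h2)

/-- In an adhesive category, a pushout along a monomorphism (with monic legs)
is a final pullback complement. -/
theorem isFPBC_of_isPushout [Adhesive C] {K L E S : C} {a : K ⟶ L} {b : K ⟶ E} {c : L ⟶ S}
    {d : E ⟶ S} [Mono a] [Mono d] (H : IsPushout a b c d) : IsFPBC a c b d := by
  refine ⟨Adhesive.isPullback_of_isPushout_of_mono_left H, ?_⟩
  intro P Q x y z hP p hp
  have hw' : (p ≫ b) ≫ d = y ≫ z := by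
    rw [Category.assoc, ← H.w, ← Category.assoc, hp, hP.w]
  set w' : P ⟶ pullback d z := pullback.lift (p ≫ b) y hw' with hw'def
  have hw'e : w' ≫ pullback.fst d z = p ≫ b := pullback.lift_fst _ _ _
  have hw'q : w' ≫ pullback.snd d z = y := pullback.lift_snd _ _ _
  have hf : IsPullback (𝟙 P) p x a := (isPullback_id_of_factor p a x hp).flip
  have hg : IsPullback w' p (pullback.fst d z) b := by
    have key : ∀ {W : C} (a' : W ⟶ pullback d z) (b' : W ⟶ K),
        a' ≫ pullback.fst d z = b' ≫ b → ∃ l : W ⟶ P, l ≫ w' = a' ∧ l ≫ p = b' := by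
      intro W a' b' h'
      have hc : (b' ≫ a) ≫ c = (a' ≫ pullback.snd d z) ≫ z := by
        simp only [Category.assoc]
        rw [H.w, ← pullback.condition, ← Category.assoc, ← Category.assoc, h']
      have hlp : hP.lift (b' ≫ a) (a' ≫ pullback.snd d z) hc ≫ p = b' := by
        rw [← cancel_mono a, Category.assoc, hp, hP.lift_fst]
      refine ⟨hP.lift (b' ≫ a) (a' ≫ pullback.snd d z) hc, ?_, hlp⟩
      apply pullback.hom_ext
      · rw [Category.assoc, hw'e, ← Category.assoc, hlp, h']
      · rw [Category.assoc, hw'q, hP.lift_snd]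
    refine isPullback_of_universal (by rw [hw'e]) (fun a' b' h' => (key a' b' h').choose)
      (fun a' b' h' => (key a' b' h').choose_spec.1)
      (fun a' b' h' => (key a' b' h').choose_spec.2) ?_
    intro W m m' h1 h2
    apply hP.hom_ext
    · rw [← hp, ← Category.assoc, ← Category.assoc, h2]
    · rw [← hw'q, ← Category.assoc, ← Category.assoc, h1]
  have hh : CommSq y x z c := ⟨hP.w.symm⟩
  have hi : CommSq (pullback.snd d z) (pullback.fst d z) z d := ⟨pullback.condition.symm⟩
  have wsq : CommSq (𝟙 P) w' y (pullback.snd d z) := ⟨by rw [Category.id_comp, hw'q]⟩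
  have Htop : IsPushout (𝟙 P) w' y (pullback.snd d z) :=
    (Adhesive.van_kampen H (𝟙 P) w' y (pullback.snd d z) p x (pullback.fst d z) z hf hg hh hi
      wsq).mpr ⟨hP.flip, (IsPullback.of_hasPullback d z).flip⟩
  set φ : Q ⟶ pullback d z := Htop.desc w' (𝟙 _) (by rw [Category.id_comp, Category.comp_id])
    with hφdef
  have h1 : y ≫ φ = w' := Htop.inl_desc _ _ _
  have h2 : pullback.snd d z ≫ φ = 𝟙 _ := Htop.inr_desc _ _ _
  have h3 : φ ≫ pullback.snd d z = 𝟙 Q := by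
    apply Htop.hom_ext
    · rw [← Category.assoc, h1, hw'q, Category.comp_id]
    · rw [← Category.assoc, h2, Category.id_comp, Category.comp_id]
  refine ⟨φ ≫ pullback.fst d z, ⟨?_, ?_⟩, ?_⟩
  · rw [Category.assoc, pullback.condition, ← Category.assoc, h3, Category.id_comp]
  · rw [← Category.assoc, h1, hw'e]
  · rintro u' ⟨hu1, hu2⟩
    rw [← cancel_mono d, hu1, Category.assoc, pullback.condition, ← Category.assoc, h3,
      Category.id_comp]

/-- Pulling back a pushout along monomorphisms yields a jointly epic pair:
two maps out of `Z` agreeing on the pullbacks of both legs are equal. -/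
theorem pullback_pushout_hom_ext [Adhesive C] {K L E S Z W : C}
    {a : K ⟶ L} {b : K ⟶ E} {c : L ⟶ S} {d : E ⟶ S} [Mono a] [Mono c] [Mono d]
    (H : IsPushout a b c d) (x : Z ⟶ S) {u v : Z ⟶ W}
    (h₁ : pullback.snd c x ≫ u = pullback.snd c x ≫ v)
    (h₂ : pullback.snd d x ≫ u = pullback.snd d x ≫ v) : u = v := by
  have hac : (pullback.fst (a ≫ c) x ≫ a) ≫ c = pullback.snd (a ≫ c) x ≫ x := by
    rw [Category.assoc]; exact pullback.condition
  have hbd : (pullback.fst (a ≫ c) x ≫ b) ≫ d = pullback.snd (a ≫ c) x ≫ x := by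
    rw [Category.assoc, ← H.w]; exact pullback.condition
  have hfface : IsPullback (pullback.lift _ _ hac) (pullback.fst (a ≫ c) x)
      (pullback.fst c x) a := by
    have sfull := IsPullback.of_hasPullback (a ≫ c) x
    rw [← pullback.lift_snd _ _ hac] at sfull
    exact (IsPullback.of_bot sfull (pullback.lift_fst _ _ _).symm
      (IsPullback.of_hasPullback c x)).flip
  have hgface : IsPullback (pullback.lift _ _ hbd) (pullback.fst (a ≫ c) x)
      (pullback.fst d x) b := by
    have sfull2 : IsPullback (pullback.fst (a ≫ c) x) (pullback.snd (a ≫ c) x) (b ≫ d) x := by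
      rw [← H.w]; exact IsPullback.of_hasPullback (a ≫ c) x
    rw [← pullback.lift_snd _ _ hbd] at sfull2
    exact (IsPullback.of_bot sfull2 (pullback.lift_fst _ _ _).symm
      (IsPullback.of_hasPullback d x)).flip
  have HZ : IsPushout (pullback.lift _ _ hac) (pullback.lift _ _ hbd)
      (pullback.snd c x) (pullback.snd d x) :=
    (Adhesive.van_kampen H (pullback.lift _ _ hac) (pullback.lift _ _ hbd)
      (pullback.snd c x) (pullback.snd d x) (pullback.fst (a ≫ c) x) (pullback.fst c x)
      (pullback.fst d x) x hfface hgface ⟨pullback.condition.symm⟩ ⟨pullback.condition.symm⟩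
      ⟨by rw [pullback.lift_snd, pullback.lift_snd]⟩).mpr
      ⟨(IsPullback.of_hasPullback c x).flip, (IsPullback.of_hasPullback d x).flip⟩
  exact HZ.hom_ext h₁ h₂

/-- In an adhesive category, the map induced on a pushout of monomorphisms by a
cospan of monomorphisms whose pullback is the given span is a monomorphism
(pushouts of monos are unions). -/
theorem mono_of_isPushout_of_isPullback [Adhesive C] {K L E S G : C}
    {a : K ⟶ L} {b : K ⟶ E} {c : L ⟶ S} {d : E ⟶ S} {u : L ⟶ G} {v : E ⟶ G} {w : S ⟶ G}
    [Mono a] [Mono c] [Mono d] [Mono u] [Mono v]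
    (HPO : IsPushout a b c d) (HPB : IsPullback a b u v)
    (hcu : c ≫ w = u) (hdv : d ≫ w = v) : Mono w := by
  constructor
  intro Z x y hxy
  apply pullback_pushout_hom_ext HPO x
  · have ht : (pullback.snd c x ≫ y) ≫ w = pullback.fst c x ≫ u := by
      rw [Category.assoc, ← hxy, ← Category.assoc, ← pullback.condition, Category.assoc, hcu]
    rw [← pullback.condition]
    apply pullback_pushout_hom_ext HPO (pullback.snd c x ≫ y)
    · have hq : pullback.fst c (pullback.snd c x ≫ y)
          = pullback.snd c (pullback.snd c x ≫ y) ≫ pullback.fst c x := by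
        rw [← cancel_mono u]
        calc pullback.fst c (pullback.snd c x ≫ y) ≫ u
            = (pullback.fst c (pullback.snd c x ≫ y) ≫ c) ≫ w := by rw [Category.assoc, hcu]
          _ = (pullback.snd c (pullback.snd c x ≫ y) ≫ (pullback.snd c x ≫ y)) ≫ w := by
              rw [pullback.condition]
          _ = pullback.snd c (pullback.snd c x ≫ y) ≫ ((pullback.snd c x ≫ y) ≫ w) := by
              simp only [Category.assoc]
          _ = pullback.snd c (pullback.snd c x ≫ y) ≫ (pullback.fst c x ≫ u) := by rw [ht]
          _ = (pullback.snd c (pullback.snd c x ≫ y) ≫ pullback.fst c x) ≫ u := by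
              simp only [Category.assoc]
      calc pullback.snd c (pullback.snd c x ≫ y) ≫ (pullback.fst c x ≫ c)
          = (pullback.snd c (pullback.snd c x ≫ y) ≫ pullback.fst c x) ≫ c := by
            simp only [Category.assoc]
        _ = pullback.fst c (pullback.snd c x ≫ y) ≫ c := by rw [← hq]
        _ = pullback.snd c (pullback.snd c x ≫ y) ≫ (pullback.snd c x ≫ y) :=
            pullback.condition
    · have hκ : (pullback.snd d (pullback.snd c x ≫ y) ≫ pullback.fst c x) ≫ u
          = pullback.fst d (pullback.snd c x ≫ y) ≫ v := by
        calc (pullback.snd d (pullback.snd c x ≫ y) ≫ pullback.fst c x) ≫ u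
            = pullback.snd d (pullback.snd c x ≫ y) ≫ (pullback.fst c x ≫ u) := by
              simp only [Category.assoc]
          _ = pullback.snd d (pullback.snd c x ≫ y) ≫ ((pullback.snd c x ≫ y) ≫ w) := by
              rw [ht]
          _ = (pullback.snd d (pullback.snd c x ≫ y) ≫ (pullback.snd c x ≫ y)) ≫ w := by
              simp only [Category.assoc]
          _ = (pullback.fst d (pullback.snd c x ≫ y) ≫ d) ≫ w := by rw [← pullback.condition]
          _ = pullback.fst d (pullback.snd c x ≫ y) ≫ v := by rw [Category.assoc, hdv]
      calc pullback.snd d (pullback.snd c x ≫ y) ≫ (pullback.fst c x ≫ c)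
          = (pullback.snd d (pullback.snd c x ≫ y) ≫ pullback.fst c x) ≫ c := by
            simp only [Category.assoc]
        _ = (HPB.lift _ _ hκ ≫ a) ≫ c := by rw [HPB.lift_fst]
        _ = (HPB.lift _ _ hκ ≫ b) ≫ d := by
            rw [Category.assoc, Category.assoc, HPO.w]
        _ = pullback.fst d (pullback.snd c x ≫ y) ≫ d := by rw [HPB.lift_snd]
        _ = pullback.snd d (pullback.snd c x ≫ y) ≫ (pullback.snd c x ≫ y) :=
            pullback.condition
  · have ht' : (pullback.snd d x ≫ y) ≫ w = pullback.fst d x ≫ v := by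
      rw [Category.assoc, ← hxy, ← Category.assoc, ← pullback.condition, Category.assoc, hdv]
    rw [← pullback.condition]
    apply pullback_pushout_hom_ext HPO (pullback.snd d x ≫ y)
    · have hκ' : pullback.fst c (pullback.snd d x ≫ y) ≫ u
          = (pullback.snd c (pullback.snd d x ≫ y) ≫ pullback.fst d x) ≫ v := by
        calc pullback.fst c (pullback.snd d x ≫ y) ≫ u
            = (pullback.fst c (pullback.snd d x ≫ y) ≫ c) ≫ w := by rw [Category.assoc, hcu]
          _ = (pullback.snd c (pullback.snd d x ≫ y) ≫ (pullback.snd d x ≫ y)) ≫ w := by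
              rw [pullback.condition]
          _ = pullback.snd c (pullback.snd d x ≫ y) ≫ ((pullback.snd d x ≫ y) ≫ w) := by
              simp only [Category.assoc]
          _ = pullback.snd c (pullback.snd d x ≫ y) ≫ (pullback.fst d x ≫ v) := by rw [ht']
          _ = (pullback.snd c (pullback.snd d x ≫ y) ≫ pullback.fst d x) ≫ v := by
              simp only [Category.assoc]
      calc pullback.snd c (pullback.snd d x ≫ y) ≫ (pullback.fst d x ≫ d)
          = (pullback.snd c (pullback.snd d x ≫ y) ≫ pullback.fst d x) ≫ d := by
            simp only [Category.assoc]
        _ = (HPB.lift _ _ hκ' ≫ b) ≫ d := by rw [HPB.lift_snd]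
        _ = (HPB.lift _ _ hκ' ≫ a) ≫ c := by
            rw [Category.assoc, Category.assoc, HPO.w]
        _ = pullback.fst c (pullback.snd d x ≫ y) ≫ c := by rw [HPB.lift_fst]
        _ = pullback.snd c (pullback.snd d x ≫ y) ≫ (pullback.snd d x ≫ y) :=
            pullback.condition
    · have hq' : pullback.fst d (pullback.snd d x ≫ y)
          = pullback.snd d (pullback.snd d x ≫ y) ≫ pullback.fst d x := by
        rw [← cancel_mono v]
        calc pullback.fst d (pullback.snd d x ≫ y) ≫ v
            = (pullback.fst d (pullback.snd d x ≫ y) ≫ d) ≫ w := by rw [Category.assoc, hdv]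
          _ = (pullback.snd d (pullback.snd d x ≫ y) ≫ (pullback.snd d x ≫ y)) ≫ w := by
              rw [pullback.condition]
          _ = pullback.snd d (pullback.snd d x ≫ y) ≫ ((pullback.snd d x ≫ y) ≫ w) := by
              simp only [Category.assoc]
          _ = pullback.snd d (pullback.snd d x ≫ y) ≫ (pullback.fst d x ≫ v) := by rw [ht']
          _ = (pullback.snd d (pullback.snd d x ≫ y) ≫ pullback.fst d x) ≫ v := by
              simp only [Category.assoc]
      calc pullback.snd d (pullback.snd d x ≫ y) ≫ (pullback.fst d x ≫ d)
          = (pullback.snd d (pullback.snd d x ≫ y) ≫ pullback.fst d x) ≫ d := by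
            simp only [Category.assoc]
        _ = pullback.fst d (pullback.snd d x ≫ y) ≫ d := by rw [← hq']
        _ = pullback.snd d (pullback.snd d x ≫ y) ≫ (pullback.snd d x ≫ y) :=
            pullback.condition

/-- Backward modularity of derivations. -/
theorem backward_modularity [Adhesive C] {L R S T G H : C}
    (α : Rule L R) (β : Rule G H) (γ : Rule S T)
    (f : L ⟶ G) (f₁ : L ⟶ S) (g₁ : R ⟶ T) (g₂ : T ⟶ H)
    [Mono f] [Mono f₁] [Mono g₁] [Mono g₂]
    (h1 : IsDerivation α f (g₁ ≫ g₂) β)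
    (h2 : IsDerivation α.rev g₁ f₁ γ.rev) :
    ∃! f₂ : S ⟶ G, Mono f₂ ∧ f₁ ≫ f₂ = f ∧
      IsDerivation α f₁ g₁ γ ∧ IsDerivation γ f₂ g₂ β := by
  haveI := α.mono_left; haveI := α.mono_right
  haveI := β.mono_left; haveI := β.mono_right
  haveI := γ.mono_left; haveI := γ.mono_right
  obtain ⟨h, monoh, FPBC1, PO1⟩ := h1
  obtain ⟨kr, monokr, FPBC2r, PO2r⟩ := h2
  set k : α.K ⟶ γ.K := kr with hkdef
  have monok : Mono k := monokr
  haveI := monoh; haveI := monok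
  have FPBC2 : IsFPBC α.right g₁ k γ.right := FPBC2r
  have PO2 : IsPushout α.left k f₁ γ.left := PO2r
  -- the pullback `E' = T ×_H D`
  have PB' : IsPullback (pullback.fst g₂ β.right) (pullback.snd g₂ β.right) g₂ β.right :=
    IsPullback.of_hasPullback g₂ β.right
  have hk'w : (α.right ≫ g₁) ≫ g₂ = h ≫ β.right := by rw [Category.assoc]; exact PO1.w
  set k' : α.K ⟶ pullback g₂ β.right := pullback.lift (α.right ≫ g₁) h hk'w with hk'def
  have hk't : k' ≫ pullback.fst g₂ β.right = α.right ≫ g₁ := pullback.lift_fst _ _ _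
  have hk'd : k' ≫ pullback.snd g₂ β.right = h := pullback.lift_snd _ _ _
  -- the square `(α.right, k', g₁, t')` is a pushout, by van Kampen applied to PO1
  have hgcube : IsPullback k' (𝟙 α.K) (pullback.snd g₂ β.right) h := by
    refine isPullback_of_universal (by rw [hk'd, Category.id_comp]) (fun zq zk hzz => zk) ?_
      (fun zq zk hzz => by simp) (fun m m' hm1 hm2 => by simpa using hm2)
    intro W zq zk hzz
    apply pullback.hom_ext
    · show (zk ≫ k') ≫ pullback.fst g₂ β.right = zq ≫ pullback.fst g₂ β.right
      have hzfst : zq ≫ pullback.fst g₂ β.right = zk ≫ (α.right ≫ g₁) := by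
        rw [← cancel_mono g₂]
        calc (zq ≫ pullback.fst g₂ β.right) ≫ g₂
            = zq ≫ (pullback.fst g₂ β.right ≫ g₂) := by simp only [Category.assoc]
          _ = zq ≫ (pullback.snd g₂ β.right ≫ β.right) := by rw [pullback.condition]
          _ = (zq ≫ pullback.snd g₂ β.right) ≫ β.right := by simp only [Category.assoc]
          _ = (zk ≫ h) ≫ β.right := by rw [hzz]
          _ = zk ≫ (h ≫ β.right) := by simp only [Category.assoc]
          _ = zk ≫ (α.right ≫ (g₁ ≫ g₂)) := by rw [← PO1.w]
          _ = (zk ≫ (α.right ≫ g₁)) ≫ g₂ := by simp only [Category.assoc]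
      rw [Category.assoc, hk't, hzfst]
    · show (zk ≫ k') ≫ pullback.snd g₂ β.right = zq ≫ pullback.snd g₂ β.right
      rw [Category.assoc, hk'd, hzz]
  have POE' : IsPushout α.right k' g₁ (pullback.fst g₂ β.right) :=
    (Adhesive.van_kampen PO1 α.right k' g₁ (pullback.fst g₂ β.right) (𝟙 α.K) (𝟙 R)
      (pullback.snd g₂ β.right) g₂ (IsPullback.id_vert α.right) hgcube
      ⟨by rw [Category.id_comp]⟩ ⟨pullback.condition⟩ ⟨hk't.symm⟩).mpr
      ⟨isPullback_id_of_factor g₁ g₂ (g₁ ≫ g₂) rfl, PB'⟩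
  have FPBCE' : IsFPBC α.right g₁ k' (pullback.fst g₂ β.right) := isFPBC_of_isPushout POE'
  -- compare the two FPBCs of `(α.right, g₁)`
  obtain ⟨φ, ⟨hφ1, hφ2⟩, -⟩ :=
    FPBCE'.final α.right k γ.right FPBC2.isPullback (𝟙 α.K) (Category.id_comp _)
  obtain ⟨ψ, ⟨hψ1, hψ2⟩, -⟩ :=
    FPBC2.final α.right k' (pullback.fst g₂ β.right) FPBCE'.isPullback (𝟙 α.K)
      (Category.id_comp _)
  have hφ2' : k ≫ φ = k' := by rw [hφ2, Category.id_comp]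
  have hψ2' : k' ≫ ψ = k := by rw [hψ2, Category.id_comp]
  haveI : IsIso φ := by
    refine ⟨ψ, ?_, ?_⟩
    · rw [← cancel_mono γ.right, Category.assoc, hψ1, hφ1, Category.id_comp]
    · rw [← cancel_mono (pullback.fst g₂ β.right), Category.assoc, hφ1, hψ1, Category.id_comp]
  -- the pushout square `(α.right, k, g₁, γ.right)`
  have POb : IsPushout α.right k g₁ γ.right :=
    POE'.of_iso (Iso.refl _) (Iso.refl _) (asIso φ).symm (Iso.refl _)
      (by simp) (by simp [← hφ2']) (by simp) (by simp [← hφ1])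
  -- the mediating mono `m : γ.K ⟶ β.K`
  set m : γ.K ⟶ β.K := φ ≫ pullback.snd g₂ β.right with hmdef
  haveI : Mono m := mono_comp _ _
  have km : k ≫ m = h := by rw [hmdef, ← Category.assoc, hφ2', hk'd]
  -- the FPBC `(k, γ.left)` of `(α.left, f₁)`
  have FPBCb : IsFPBC α.left f₁ k γ.left := isFPBC_of_isPushout PO2
  -- definition of `f₂`
  have hwc : α.left ≫ f = k ≫ (m ≫ β.left) := by
    rw [← Category.assoc, km]; exact FPBC1.isPullback.w
  set f₂ : S ⟶ G := PO2.desc f (m ≫ β.left) hwc with hf₂def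
  have hf₁f₂ : f₁ ≫ f₂ = f := PO2.inl_desc _ _ _
  have hγf₂ : γ.left ≫ f₂ = m ≫ β.left := PO2.inr_desc _ _ _
  have PO2pb : IsPullback α.left k f₁ γ.left :=
    Adhesive.isPullback_of_isPushout_of_mono_left PO2
  -- the bottom-left square is a pullback
  have PBbot : IsPullback γ.left m f₂ β.left := by
    have key : ∀ {W : C} (s : W ⟶ S) (dd : W ⟶ β.K), s ≫ f₂ = dd ≫ β.left →
        ∃ e : W ⟶ γ.K, e ≫ γ.left = s ∧ e ≫ m = dd := by
      intro W s dd hsd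
      have hpc : pullback.fst f₁ s ≫ f = (pullback.snd f₁ s ≫ dd) ≫ β.left := by
        rw [← hf₁f₂, ← Category.assoc, pullback.condition, Category.assoc, Category.assoc, hsd]
      obtain ⟨e, ⟨he1, he2⟩, -⟩ := FPBCb.final (pullback.fst f₁ s) (pullback.snd f₁ s) s
        (IsPullback.of_hasPullback f₁ s)
        (FPBC1.isPullback.lift (pullback.fst f₁ s) (pullback.snd f₁ s ≫ dd) hpc)
        (FPBC1.isPullback.lift_fst _ _ _)
      refine ⟨e, he1, ?_⟩
      rw [← cancel_mono β.left, Category.assoc, ← hγf₂, ← Category.assoc, he1, hsd]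
    refine isPullback_of_universal hγf₂ (fun s dd hsd => (key s dd hsd).choose)
      (fun s dd hsd => (key s dd hsd).choose_spec.1)
      (fun s dd hsd => (key s dd hsd).choose_spec.2)
      (fun m₁ m₂ hm1 hm2 => by rw [← cancel_mono γ.left, hm1])
  -- the FPBC `(m, β.left)` of `(γ.left, f₂)`
  have FPBCc : IsFPBC γ.left f₂ m β.left := by
    refine ⟨PBbot, ?_⟩
    intro P Q x y z hPQ p hp
    have big : IsPullback (pullback.fst f₁ x) (pullback.snd f₁ x ≫ y) f z := by
      have := (IsPullback.of_hasPullback f₁ x).paste_vert hPQ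
      rwa [hf₁f₂] at this
    have hp'' : pullback.fst f₁ x ≫ f₁ = (pullback.snd f₁ x ≫ p) ≫ γ.left := by
      rw [Category.assoc, hp, pullback.condition]
    obtain ⟨uu, ⟨hu1, hu2⟩, -⟩ := FPBC1.final (pullback.fst f₁ x) (pullback.snd f₁ x ≫ y) z big
      (PO2pb.lift (pullback.fst f₁ x) (pullback.snd f₁ x ≫ p) hp'') (PO2pb.lift_fst _ _ _)
    refine ⟨uu, ⟨hu1, ?_⟩, ?_⟩
    · rw [← cancel_mono β.left, Category.assoc, Category.assoc, ← hγf₂, hu1, ← Category.assoc,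
        hp, hPQ.w]
    · rintro u' ⟨hu1', hu2'⟩
      rw [← cancel_mono β.left, hu1, hu1']
  -- the pushout square `(γ.right, m, g₂, β.right)`
  have pcomm : γ.right ≫ g₂ = m ≫ β.right := by
    rw [hmdef, Category.assoc, ← pullback.condition, ← Category.assoc, hφ1]
  have POc : IsPushout γ.right m g₂ β.right := by
    have PO1' : IsPushout α.right (k ≫ m) (g₁ ≫ g₂) β.right := by rw [km]; exact PO1
    exact IsPushout.of_top PO1' pcomm POb
  -- `f₂` is a monomorphism
  have HPB : IsPullback α.left k f (m ≫ β.left) := by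
    have P1 : IsPullback k (𝟙 α.K) m h := isPullback_id_of_factor k m h km
    have h2 := (P1.paste_vert FPBC1.isPullback.flip).flip
    rwa [Category.id_comp] at h2
  haveI monof₂ : Mono f₂ :=
    mono_of_isPushout_of_isPullback PO2 HPB hf₁f₂ hγf₂
  refine ⟨f₂, ⟨monof₂, hf₁f₂, ⟨k, monok, FPBCb, POb⟩, ⟨m, ‹Mono m›, FPBCc, POc⟩⟩, ?_⟩
  rintro f₂' ⟨monof₂', hcomp', ⟨k₂, -, -, -⟩, ⟨m', monom', Fc', Pc'⟩⟩
  have hm'm : m' = m := by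
    rw [← cancel_mono β.right, ← Pc'.w, pcomm]
  apply PO2.hom_ext
  · rw [hf₁f₂, hcomp']
  · rw [hγf₂, Fc'.isPullback.w, hm'm]
end

section
/- Derivability versus reversibility: Let C be an adhesive category, α : L ⇀ R a rule, and g : R ⟶ H a match, and suppose g ⇒[α†] f with corule β for some match f : L ⟶ G and rule β : H ⇀ G. Then g is derivable by α if and only if f ⇒[α] g with corule β†. -/
open CategoryTheory Limits

universe v u

variable {C : Type u} [Category.{v} C]

/-- In an adhesive category, a pushout along a monomorphism is a final pullback
complement. -/
theorem isFPBC_of_isPushout_s2 [Adhesive C] {K L D G : C} {m : K ⟶ L} {h : K ⟶ D}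
    {n : L ⟶ G} {d : D ⟶ G} [Mono m] (H : IsPushout m h n d) : IsFPBC m n h d := by
  have hd : Mono d := Adhesive.mono_of_isPushout_of_mono_left H
  refine ⟨Adhesive.isPullback_of_isPushout_of_mono_left H, ?_⟩
  intro P Q f₁' g₁' g₂' pb p hp
  -- build the cube over the pushout square
  let αW : pullback m f₁' ⟶ K := pullback.fst m f₁'
  let f' : pullback m f₁' ⟶ P := pullback.snd m f₁'
  let πD : pullback d g₂' ⟶ D := pullback.fst d g₂'
  let πQ : pullback d g₂' ⟶ Q := pullback.snd d g₂'
  have pbK : IsPullback αW f' m f₁' := IsPullback.of_hasPullback m f₁'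
  have pbD : IsPullback πD πQ d g₂' := IsPullback.of_hasPullback d g₂'
  have wg' : (αW ≫ h) ≫ d = (f' ≫ g₁') ≫ g₂' := by
    rw [Category.assoc, Category.assoc, ← H.w, ← pb.w, pbK.w_assoc]
  let g' : pullback m f₁' ⟶ pullback d g₂' := pullback.lift (αW ≫ h) (f' ≫ g₁') wg'
  have hg'D : g' ≫ πD = αW ≫ h := pullback.lift_fst _ _ _
  have hg'Q : g' ≫ πQ = f' ≫ g₁' := pullback.lift_snd _ _ _
  -- the face over `h` is a pullback
  have big : IsPullback (g' ≫ πQ) αW g₂' (h ≫ d) := by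
    rw [hg'Q, ← H.w]
    exact pbK.flip.paste_horiz pb.flip
  have faceh : IsPullback g' αW πD h := big.of_right hg'D pbD.flip
  -- van Kampen: the top face is a pushout
  have top : IsPushout f' g' g₁' πQ := by
    refine ((Adhesive.van_kampen H) f' g' g₁' πQ αW f₁' πD g₂' pbK.flip faceh
      ⟨pb.w.symm⟩ ⟨pbD.w.symm⟩ ⟨hg'Q.symm⟩).mpr ⟨pb.flip, pbD.flip⟩
  -- key compatibility: `f' ≫ p = αW`
  have hfp : f' ≫ p = αW := by
    have : (f' ≫ p) ≫ m = αW ≫ m := by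
      rw [Category.assoc, hp, ← pbK.w]
    exact (cancel_mono m).mp this
  have wu : f' ≫ (p ≫ h) = g' ≫ πD := by
    rw [hg'D, ← hfp, Category.assoc]
  refine ⟨top.desc (p ≫ h) πD wu, ⟨?_, top.inl_desc _ _ _⟩, ?_⟩
  · -- `u ≫ d = g₂'`
    apply top.hom_ext
    · rw [top.inl_desc_assoc]
      rw [Category.assoc, ← H.w, ← Category.assoc, hp, pb.w]
    · rw [top.inr_desc_assoc, pbD.w]
  · rintro u' ⟨hu'1, hu'2⟩
    apply top.hom_ext
    · rw [hu'2, top.inl_desc]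
    · rw [top.inr_desc]
      have : (πQ ≫ u') ≫ d = πD ≫ d := by
        rw [Category.assoc, hu'1, pbD.w]
      exact (cancel_mono d).mp this

/-- Derivability versus reversibility. -/
theorem derivability_iff_reversibility [Adhesive C] {L R G H : C}
    (α : Rule L R) (g : R ⟶ H) (f : L ⟶ G) (β : Rule H G)
    [Mono g] [Mono f]
    (h : IsDerivation α.rev g f β) :
    Derivable α g ↔ IsDerivation α f g β.rev := by
  obtain ⟨k, hk, hfpbc, hpo⟩ := h
  -- hfpbc : IsFPBC α.right g k β.left, hpo : IsPushout α.left k f β.right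
  constructor
  · rintro ⟨G', f', γ, hf', k', hk', hfpbc', hpo'⟩
    refine ⟨k, hk, ?_, ?_⟩
    · have := α.mono_left
      exact isFPBC_of_isPushout_s2 hpo
    · -- show `IsPushout α.right k g β.left`
      have := α.mono_right
      have F' : IsFPBC α.right g k' γ.right := isFPBC_of_isPushout_s2 hpo'
      obtain ⟨u, ⟨hu1, hu2⟩, _⟩ :=
        hfpbc.final α.right k' γ.right F'.isPullback (𝟙 _) (Category.id_comp _)
      obtain ⟨v, ⟨hv1, hv2⟩, _⟩ :=
        F'.final α.right k β.left hfpbc.isPullback (𝟙 _) (Category.id_comp _)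
      erw [Category.id_comp] at hu2 hv2
      -- `u` and `v` are mutually inverse, by uniqueness
      obtain ⟨w, -, wuniq⟩ :=
        hfpbc.final α.right k β.left hfpbc.isPullback (𝟙 _) (Category.id_comp _)
      have hvu : v ≫ u = 𝟙 _ := by
        rw [wuniq (v ≫ u) ⟨by rw [Category.assoc, hu1, hv1], by
              erw [← Category.assoc, hv2, hu2, Category.id_comp]⟩,
          wuniq (𝟙 _) ⟨Category.id_comp _, by erw [Category.comp_id, Category.id_comp]⟩]
      obtain ⟨w', -, w'uniq⟩ :=
        F'.final α.right k' γ.right F'.isPullback (𝟙 _) (Category.id_comp _)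
      have huv : u ≫ v = 𝟙 _ := by
        rw [w'uniq (u ≫ v) ⟨by rw [Category.assoc, hv1, hu1], by
              rw [← Category.assoc, hu2, hv2, Category.id_comp]⟩,
          w'uniq (𝟙 _) ⟨Category.id_comp _, by rw [Category.comp_id, Category.id_comp]⟩]
      exact hpo'.of_iso (Iso.refl _) (Iso.refl _) ⟨u, v, huv, hvu⟩ (Iso.refl _)
        (by simp) (by simp; exact hu2.trans (Category.id_comp _).symm) (by simp) (by simp; exact hu1.symm)
  · rintro ⟨k₂, hk₂, F, P⟩
    exact ⟨G, f, β.rev, inferInstance, k₂, hk₂, F, P⟩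
end

section
/- Finiteness of minimal gluings: Let C be an adhesive category with binary products in which every object has only finitely many subobjects (C is finitely powered). Then for any two objects G₁, G₂ of C, the set of isomorphism classes of minimal gluings of G₁ and G₂ is finite. -/
open CategoryTheory Limits

universe v u

variable {C : Type u} [Category.{v} C]

lemma aux_mono_fst_of_isPullback {P A B Z : C} {f : P ⟶ A} {g : P ⟶ B} {m : A ⟶ Z} {n : B ⟶ Z}
    [Mono n] (hP : IsPullback f g m n) : Mono f := by
  constructor
  intro T a b hab
  have hg : a ≫ g = b ≫ g := by
    rw [← cancel_mono n, Category.assoc, Category.assoc, ← hP.w,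
      ← Category.assoc, ← Category.assoc, hab]
  exact hP.hom_ext hab hg

/-- Hom-extensionality along a morphism into a pushout of monos (descent from van Kampen). -/
lemma aux_pushout_hom_ext [Adhesive C] {P A B Q T S : C} {f : P ⟶ A} {g : P ⟶ B}
    {u : A ⟶ Q} {v : B ⟶ Q} [Mono f] [Mono u] [Mono v]
    (hQ : IsPushout f g u v) (t : T ⟶ Q) {a b : T ⟶ S}
    (hA : ∀ (X' : C) (x : X' ⟶ A) (y : X' ⟶ T), x ≫ u = y ≫ t → y ≫ a = y ≫ b)
    (hB : ∀ (Y' : C) (x : Y' ⟶ B) (y : Y' ⟶ T), x ≫ v = y ≫ t → y ≫ a = y ≫ b) :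
    a = b := by
  let πX : pullback u t ⟶ A := pullback.fst u t
  let pX : pullback u t ⟶ T := pullback.snd u t
  let πY : pullback v t ⟶ B := pullback.fst v t
  let pY : pullback v t ⟶ T := pullback.snd v t
  let πW : pullback (f ≫ u) t ⟶ P := pullback.fst (f ≫ u) t
  let pW : pullback (f ≫ u) t ⟶ T := pullback.snd (f ≫ u) t
  have hf' : (πW ≫ f) ≫ u = pW ≫ t := by rw [Category.assoc]; exact pullback.condition
  have hg' : (πW ≫ g) ≫ v = pW ≫ t := by
    rw [Category.assoc, ← hQ.w]; exact pullback.condition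
  let f' : pullback (f ≫ u) t ⟶ pullback u t := pullback.lift (πW ≫ f) pW hf'
  let g' : pullback (f ≫ u) t ⟶ pullback v t := pullback.lift (πW ≫ g) pW hg'
  have hfX : f' ≫ pX = pW := pullback.lift_snd _ _ _
  have hgY : g' ≫ pY = pW := pullback.lift_snd _ _ _
  have frontX : IsPullback pX πX t u := (IsPullback.of_hasPullback u t).flip
  have frontY : IsPullback pY πY t v := (IsPullback.of_hasPullback v t).flip
  have backF : IsPullback f' πW πX f := by
    have hs : IsPullback (f' ≫ pX) πW t (f ≫ u) := by
      rw [hfX]; exact (IsPullback.of_hasPullback (f ≫ u) t).flip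
    exact hs.of_right (pullback.lift_fst _ _ _) frontX
  have backG : IsPullback g' πW πY g := by
    have hs : IsPullback (g' ≫ pY) πW t (g ≫ v) := by
      rw [hgY, ← hQ.w]; exact (IsPullback.of_hasPullback (f ≫ u) t).flip
    exact hs.of_right (pullback.lift_fst _ _ _) frontY
  have top : IsPushout f' g' pX pY := by
    refine (Adhesive.van_kampen hQ f' g' pX pY πW πX πY t backF backG
      ⟨pullback.condition.symm⟩ ⟨pullback.condition.symm⟩ ⟨by rw [hfX, hgY]⟩).mpr
      ⟨frontX, frontY⟩
  exact top.hom_ext (hA _ πX pX pullback.condition) (hB _ πY pY pullback.condition)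

/-- In an adhesive category, the legs of a pushout over a pullback of monos pull back:
`u : A ⟶ Q` is the pullback of `m : A ⟶ Z` along the induced `q : Q ⟶ Z`. -/
lemma aux_star [Adhesive C] {P A B Z Q : C} {f : P ⟶ A} {g : P ⟶ B} {m : A ⟶ Z} {n : B ⟶ Z}
    {u : A ⟶ Q} {v : B ⟶ Q} {q : Q ⟶ Z} [Mono m] [Mono n]
    (hP : IsPullback f g m n) (hQ : IsPushout f g u v) (hu : u ≫ q = m) (hv : v ≫ q = n) :
    IsPullback u (𝟙 A) q m := by
  haveI : Mono f := aux_mono_fst_of_isPullback hP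
  haveI : Mono g := aux_mono_fst_of_isPullback hP.flip
  haveI : Mono u := Adhesive.mono_of_isPushout_of_mono_right hQ
  haveI : Mono v := Adhesive.mono_of_isPushout_of_mono_left hQ
  let e : pullback m q ⟶ A := pullback.fst m q
  let d : pullback m q ⟶ Q := pullback.snd m q
  let j : A ⟶ pullback m q := pullback.lift (𝟙 A) u (by rw [Category.id_comp, hu])
  have je : j ≫ e = 𝟙 A := pullback.lift_fst _ _ _
  have jd : j ≫ d = u := pullback.lift_snd _ _ _
  have ej : e ≫ j = 𝟙 (pullback m q) := by
    refine aux_pushout_hom_ext hQ d ?_ ?_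
    · intro X' x y hxy
      have hye : y ≫ e = x := by
        rw [← cancel_mono m, Category.assoc, pullback.condition, ← Category.assoc, ← hxy,
          Category.assoc, hu]
      apply pullback.hom_ext
      · rw [Category.assoc, Category.comp_id, Category.assoc, je, Category.comp_id]
      · rw [Category.assoc, Category.comp_id, Category.assoc, jd, ← Category.assoc, hye, hxy]
    · intro Y' x y hxy
      have h1 : (y ≫ e) ≫ m = x ≫ n := by
        rw [Category.assoc, pullback.condition, ← Category.assoc, ← hxy, Category.assoc, hv]
      have wf : hP.lift (y ≫ e) x h1 ≫ f = y ≫ e := hP.lift_fst _ _ _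
      have wg : hP.lift (y ≫ e) x h1 ≫ g = x := hP.lift_snd _ _ _
      apply pullback.hom_ext
      · rw [Category.assoc, Category.comp_id, Category.assoc, je, Category.comp_id]
      · rw [Category.assoc, Category.comp_id, Category.assoc, jd, ← Category.assoc, ← wf,
          Category.assoc, hQ.w, ← Category.assoc, wg, hxy]
  haveI : IsIso j := ⟨e, je, ej⟩
  have left : IsPullback j (𝟙 A) e (𝟙 A) := IsPullback.of_horiz_isIso ⟨by simp [je]⟩
  have right : IsPullback d e q m := (IsPullback.of_hasPullback m q).flip
  have := left.paste_horiz right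
  rw [jd, Category.id_comp] at this
  exact this

/-- Effective unions in adhesive categories: the induced map from the pushout over a
pullback of two monos to the ambient object is a mono. -/
lemma aux_union_mono [Adhesive C] {P A B Z Q : C} {f : P ⟶ A} {g : P ⟶ B} {m : A ⟶ Z}
    {n : B ⟶ Z} {u : A ⟶ Q} {v : B ⟶ Q} {q : Q ⟶ Z} [Mono m] [Mono n]
    (hP : IsPullback f g m n) (hQ : IsPushout f g u v) (hu : u ≫ q = m) (hv : v ≫ q = n) :
    Mono q := by
  haveI : Mono f := aux_mono_fst_of_isPullback hP
  haveI : Mono g := aux_mono_fst_of_isPullback hP.flip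
  haveI : Mono u := Adhesive.mono_of_isPushout_of_mono_right hQ
  haveI : Mono v := Adhesive.mono_of_isPushout_of_mono_left hQ
  have s1 : IsPullback u (𝟙 A) q m := aux_star hP hQ hu hv
  have s2 : IsPullback v (𝟙 B) q n := aux_star hP.flip hQ.flip hv hu
  constructor
  intro T t₁ t₂ h
  refine aux_pushout_hom_ext hQ t₁ ?_ ?_
  · intro X' x y hxy
    have hq : (y ≫ t₂) ≫ q = x ≫ m := by
      rw [Category.assoc, ← h, ← Category.assoc, ← hxy, Category.assoc, hu]
    have l1 : s1.lift (y ≫ t₂) x hq ≫ u = y ≫ t₂ := s1.lift_fst _ _ _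
    have l2 : s1.lift (y ≫ t₂) x hq ≫ 𝟙 A = x := s1.lift_snd _ _ _
    rw [Category.comp_id] at l2
    rw [← hxy, ← l1, l2]
  · intro Y' x y hxy
    have hq : (y ≫ t₂) ≫ q = x ≫ n := by
      rw [Category.assoc, ← h, ← Category.assoc, ← hxy, Category.assoc, hv]
    have l1 : s2.lift (y ≫ t₂) x hq ≫ v = y ≫ t₂ := s2.lift_fst _ _ _
    have l2 : s2.lift (y ≫ t₂) x hq ≫ 𝟙 B = x := s2.lift_snd _ _ _
    rw [Category.comp_id] at l2
    rw [← hxy, ← l1, l2]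

lemma aux_mono_prodLift {P X Y Z : C} [HasBinaryProduct X Y] {f : P ⟶ X} {g : P ⟶ Y}
    {m : X ⟶ Z} {n : Y ⟶ Z} (hP : IsPullback f g m n) : Mono (prod.lift f g) := by
  constructor
  intro T a b h
  exact hP.hom_ext (by simpa [prod.lift_fst] using congrArg (· ≫ prod.fst) h)
    (by simpa [prod.lift_snd] using congrArg (· ≫ prod.snd) h)

/-- The tip of a minimal gluing is the pushout over the pullback of its legs. -/
lemma aux_minimal_isPushout [Adhesive C] {G₁ G₂ : C} (gl : Gluing G₁ G₂) (hmin : gl.Minimal)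
    {P : C} {p₁ : P ⟶ G₁} {p₂ : P ⟶ G₂} (hP : IsPullback p₁ p₂ gl.i₁ gl.i₂) :
    IsPushout p₁ p₂ gl.i₁ gl.i₂ := by
  haveI := gl.mono₁; haveI := gl.mono₂
  haveI : Mono p₁ := aux_mono_fst_of_isPullback hP
  haveI : Mono p₂ := aux_mono_fst_of_isPullback hP.flip
  have hQ := IsPushout.of_hasPushout p₁ p₂
  have hu : pushout.inl _ _ ≫ pushout.desc gl.i₁ gl.i₂ hP.w = gl.i₁ := pushout.inl_desc _ _ _
  have hv : pushout.inr _ _ ≫ pushout.desc gl.i₁ gl.i₂ hP.w = gl.i₂ := pushout.inr_desc _ _ _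
  have hmq : Mono (pushout.desc gl.i₁ gl.i₂ hP.w) := aux_union_mono hP hQ hu hv
  haveI : IsIso (pushout.desc gl.i₁ gl.i₂ hP.w) := hmin _ _ hmq ⟨_, hu⟩ ⟨_, hv⟩
  have tsq : IsPushout (pushout.inr p₁ p₂) (𝟙 G₂) (pushout.desc gl.i₁ gl.i₂ hP.w) gl.i₂ :=
    IsPushout.of_vert_isIso ⟨by rw [hv, Category.id_comp]⟩
  have h2 := hQ.paste_vert tsq
  rw [Category.comp_id, hu] at h2
  exact h2

/-- The overlap subobject of a gluing, as a subobject of the binary product. -/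
noncomputable def glSub [Adhesive C] [HasBinaryProducts C] {G₁ G₂ : C} (gl : Gluing G₁ G₂) :
    Subobject (G₁ ⨯ G₂) := by
  haveI := gl.mono₁; haveI := gl.mono₂
  haveI : Mono (prod.lift (pullback.fst gl.i₁ gl.i₂) (pullback.snd gl.i₁ gl.i₂)) :=
    aux_mono_prodLift (IsPullback.of_hasPullback gl.i₁ gl.i₂)
  exact Subobject.mk (prod.lift (pullback.fst gl.i₁ gl.i₂) (pullback.snd gl.i₁ gl.i₂))

lemma glSub_eq_of_gluingIso [Adhesive C] [HasBinaryProducts C] {G₁ G₂ : C}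
    {gl gl' : Gluing G₁ G₂} (h : GluingIso gl gl') : glSub gl = glSub gl' := by
  haveI := gl.mono₁; haveI := gl.mono₂; haveI := gl'.mono₁; haveI := gl'.mono₂
  obtain ⟨e, h1, h2⟩ := h
  have w : pullback.fst gl.i₁ gl.i₂ ≫ gl'.i₁ = pullback.snd gl.i₁ gl.i₂ ≫ gl'.i₂ := by
    rw [← h1, ← h2, ← Category.assoc, ← Category.assoc, pullback.condition]
  have w' : pullback.fst gl'.i₁ gl'.i₂ ≫ gl.i₁ = pullback.snd gl'.i₁ gl'.i₂ ≫ gl.i₂ := by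
    rw [← cancel_mono e.hom, Category.assoc, Category.assoc, h1, h2, pullback.condition]
  let σ : pullback gl.i₁ gl.i₂ ⟶ pullback gl'.i₁ gl'.i₂ :=
    pullback.lift (pullback.fst gl.i₁ gl.i₂) (pullback.snd gl.i₁ gl.i₂) w
  let τ : pullback gl'.i₁ gl'.i₂ ⟶ pullback gl.i₁ gl.i₂ :=
    pullback.lift (pullback.fst gl'.i₁ gl'.i₂) (pullback.snd gl'.i₁ gl'.i₂) w'
  have στ : σ ≫ τ = 𝟙 _ := by
    apply pullback.hom_ext <;> simp [σ, τ, pullback.lift_fst, pullback.lift_snd, pullback.lift_fst_assoc, pullback.lift_snd_assoc]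
  have τσ : τ ≫ σ = 𝟙 _ := by
    apply pullback.hom_ext <;> simp [σ, τ, pullback.lift_fst, pullback.lift_snd, pullback.lift_fst_assoc, pullback.lift_snd_assoc]
  haveI : Mono (prod.lift (pullback.fst gl.i₁ gl.i₂) (pullback.snd gl.i₁ gl.i₂)) :=
    aux_mono_prodLift (IsPullback.of_hasPullback gl.i₁ gl.i₂)
  haveI : Mono (prod.lift (pullback.fst gl'.i₁ gl'.i₂) (pullback.snd gl'.i₁ gl'.i₂)) :=
    aux_mono_prodLift (IsPullback.of_hasPullback gl'.i₁ gl'.i₂)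
  show Subobject.mk _ = Subobject.mk _
  refine Subobject.mk_eq_mk_of_comm _ _ ⟨σ, τ, στ, τσ⟩ ?_
  apply Limits.prod.hom_ext <;> simp [σ, prod.lift_fst, prod.lift_snd, pullback.lift_fst, pullback.lift_snd]

lemma gluingIso_of_glSub_eq [Adhesive C] [HasBinaryProducts C] {G₁ G₂ : C}
    {gl gl' : Gluing G₁ G₂} (hmin : gl.Minimal) (hmin' : gl'.Minimal)
    (h : glSub gl = glSub gl') : GluingIso gl gl' := by
  haveI := gl.mono₁; haveI := gl.mono₂; haveI := gl'.mono₁; haveI := gl'.mono₂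
  haveI : Mono (prod.lift (pullback.fst gl.i₁ gl.i₂) (pullback.snd gl.i₁ gl.i₂)) :=
    aux_mono_prodLift (IsPullback.of_hasPullback gl.i₁ gl.i₂)
  haveI : Mono (prod.lift (pullback.fst gl'.i₁ gl'.i₂) (pullback.snd gl'.i₁ gl'.i₂)) :=
    aux_mono_prodLift (IsPullback.of_hasPullback gl'.i₁ gl'.i₂)
  have h' : Subobject.mk (prod.lift (pullback.fst gl.i₁ gl.i₂) (pullback.snd gl.i₁ gl.i₂)) =
      Subobject.mk (prod.lift (pullback.fst gl'.i₁ gl'.i₂) (pullback.snd gl'.i₁ gl'.i₂)) := h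
  let σ := Subobject.ofMkLEMk _ _ h'.le
  let τ := Subobject.ofMkLEMk _ _ h'.ge
  have hσ : σ ≫ prod.lift (pullback.fst gl'.i₁ gl'.i₂) (pullback.snd gl'.i₁ gl'.i₂) =
      prod.lift (pullback.fst gl.i₁ gl.i₂) (pullback.snd gl.i₁ gl.i₂) :=
    Subobject.ofMkLEMk_comp _
  have hτ : τ ≫ prod.lift (pullback.fst gl.i₁ gl.i₂) (pullback.snd gl.i₁ gl.i₂) =
      prod.lift (pullback.fst gl'.i₁ gl'.i₂) (pullback.snd gl'.i₁ gl'.i₂) :=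
    Subobject.ofMkLEMk_comp _
  have hσ1 : σ ≫ pullback.fst gl'.i₁ gl'.i₂ = pullback.fst gl.i₁ gl.i₂ := by
    have := congrArg (· ≫ (prod.fst : G₁ ⨯ G₂ ⟶ G₁)) hσ; simpa [prod.lift_fst] using this
  have hσ2 : σ ≫ pullback.snd gl'.i₁ gl'.i₂ = pullback.snd gl.i₁ gl.i₂ := by
    have := congrArg (· ≫ (prod.snd : G₁ ⨯ G₂ ⟶ G₂)) hσ; simpa [prod.lift_snd] using this
  have hτ1 : τ ≫ pullback.fst gl.i₁ gl.i₂ = pullback.fst gl'.i₁ gl'.i₂ := by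
    have := congrArg (· ≫ (prod.fst : G₁ ⨯ G₂ ⟶ G₁)) hτ; simpa [prod.lift_fst] using this
  have hτ2 : τ ≫ pullback.snd gl.i₁ gl.i₂ = pullback.snd gl'.i₁ gl'.i₂ := by
    have := congrArg (· ≫ (prod.snd : G₁ ⨯ G₂ ⟶ G₂)) hτ; simpa [prod.lift_snd] using this
  have hU := aux_minimal_isPushout gl hmin (IsPullback.of_hasPullback gl.i₁ gl.i₂)
  have hU' := aux_minimal_isPushout gl' hmin' (IsPullback.of_hasPullback gl'.i₁ gl'.i₂)
  have w : pullback.fst gl.i₁ gl.i₂ ≫ gl'.i₁ = pullback.snd gl.i₁ gl.i₂ ≫ gl'.i₂ := by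
    rw [← hσ1, ← hσ2, Category.assoc, Category.assoc, pullback.condition]
  have w' : pullback.fst gl'.i₁ gl'.i₂ ≫ gl.i₁ = pullback.snd gl'.i₁ gl'.i₂ ≫ gl.i₂ := by
    rw [← hτ1, ← hτ2, Category.assoc, Category.assoc, pullback.condition]
  let κ : gl.U ⟶ gl'.U := hU.desc gl'.i₁ gl'.i₂ w
  let κ' : gl'.U ⟶ gl.U := hU'.desc gl.i₁ gl.i₂ w'
  have hκ1 : gl.i₁ ≫ κ = gl'.i₁ := hU.inl_desc _ _ _
  have hκ2 : gl.i₂ ≫ κ = gl'.i₂ := hU.inr_desc _ _ _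
  have hκ'1 : gl'.i₁ ≫ κ' = gl.i₁ := hU'.inl_desc _ _ _
  have hκ'2 : gl'.i₂ ≫ κ' = gl.i₂ := hU'.inr_desc _ _ _
  have c1 : κ ≫ κ' = 𝟙 _ := by
    apply hU.hom_ext
    · rw [← Category.assoc, hκ1, hκ'1, Category.comp_id]
    · rw [← Category.assoc, hκ2, hκ'2, Category.comp_id]
  have c2 : κ' ≫ κ = 𝟙 _ := by
    apply hU'.hom_ext
    · rw [← Category.assoc, hκ'1, hκ1, Category.comp_id]
    · rw [← Category.assoc, hκ'2, hκ2, Category.comp_id]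
  exact ⟨⟨κ, κ', c1, c2⟩, hκ1, hκ2⟩

/-- Finiteness of the set of isomorphism classes of minimal gluings, in an adhesive
category with binary products in which every object has finitely many subobjects. -/
theorem finiteness_of_minimal_gluings [Adhesive C] [HasBinaryProducts C]
    (hfin : ∀ X : C, Finite (Subobject X)) (G₁ G₂ : C) :
    Finite (Quot (fun g h : {gl : Gluing G₁ G₂ // gl.Minimal} => GluingIso g.1 h.1)) := by
  haveI := hfin (G₁ ⨯ G₂)
  refine Finite.of_injective
    (Quot.lift (fun gl : {gl : Gluing G₁ G₂ // gl.Minimal} => glSub gl.1)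
      (fun a b hab => glSub_eq_of_gluingIso hab)) ?_
  intro x y
  induction x using Quot.ind with | _ a =>
  induction y using Quot.ind with | _ b =>
  intro h
  exact Quot.sound (gluingIso_of_glSub_eq a.2 b.2 h)
end

section
/- Factorization through a minimal gluing: Let C be an adhesive category and let G₁, G₂, H be objects of C. For every cospan of matches f₁ : G₁ ⟶ H, f₂ : G₂ ⟶ H there exist a minimal gluing (i₁ : G₁ ⟶ U, i₂ : G₂ ⟶ U) and a match u : U ⟶ H with f₁ = u ∘ i₁ and f₂ = u ∘ i₂. Moreover, this factorization is unique up to unique isomorphism: if (i₁′ : G₁ ⟶ U′, i₂′ : G₂ ⟶ U′) is a minimal gluing and u′ : U′ ⟶ H a match with f₁ = u′ ∘ i₁′ and f₂ = u′ ∘ i₂′, then there is a unique isomorphism w : U ≅ U′ with i₁′ = w ∘ i₁, i₂′ = w ∘ i₂, and u = u′ ∘ w. -/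
open CategoryTheory Limits

universe v u

variable {C : Type u} [Category.{v} C]

/-- Build an `IsPullback` from the universal property. -/
theorem myIsPullback_of_up {P X Y Z : C} {fst : P ⟶ X} {snd : P ⟶ Y} {f : X ⟶ Z} {g : Y ⟶ Z}
    (w : fst ≫ f = snd ≫ g)
    (lift : ∀ {Q : C} (a : Q ⟶ X) (b : Q ⟶ Y), a ≫ f = b ≫ g → (Q ⟶ P))
    (lift_fst : ∀ {Q : C} (a : Q ⟶ X) (b : Q ⟶ Y) (h : a ≫ f = b ≫ g), lift a b h ≫ fst = a)
    (lift_snd : ∀ {Q : C} (a : Q ⟶ X) (b : Q ⟶ Y) (h : a ≫ f = b ≫ g), lift a b h ≫ snd = b)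
    (uniq : ∀ {Q : C} (m m' : Q ⟶ P), m ≫ fst = m' ≫ fst → m ≫ snd = m' ≫ snd → m = m') :
    IsPullback fst snd f g :=
  IsPullback.of_isLimit (PullbackCone.IsLimit.mk w
    (fun s => lift s.fst s.snd s.condition)
    (fun s => lift_fst _ _ _) (fun s => lift_snd _ _ _)
    (fun s m h₁ h₂ => uniq m _ (h₁.trans (lift_fst _ _ _).symm) (h₂.trans (lift_snd _ _ _).symm)))

/-- Key lemma: with `U` the pushout over the intersection, any map to `U` whose composite
with `u` factors through `f₁` already factors through `i₁`. -/
theorem union_aux [Adhesive C] {P G₁ G₂ H U : C}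
    (p₁ : P ⟶ G₁) (p₂ : P ⟶ G₂) (i₁ : G₁ ⟶ U) (i₂ : G₂ ⟶ U)
    (f₁ : G₁ ⟶ H) (f₂ : G₂ ⟶ H) (u : U ⟶ H) [Mono f₁] [Mono f₂] [Mono p₁] [Mono p₂]
    (sq : IsPushout p₁ p₂ i₁ i₂) (pb : IsPullback p₁ p₂ f₁ f₂)
    (h₁ : i₁ ≫ u = f₁) (h₂ : i₂ ≫ u = f₂)
    {Q : C} (a : Q ⟶ U) (b : Q ⟶ G₁) (hab : a ≫ u = b ≫ f₁) : a = b ≫ i₁ := by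
  haveI : HasPullback f₁ u := Adhesive.hasPullback_of_mono_left f₁ u
  set t₁ : pullback f₁ u ⟶ G₁ := pullback.fst f₁ u with ht₁
  set t₂ : pullback f₁ u ⟶ U := pullback.snd f₁ u with ht₂
  have tw : t₁ ≫ f₁ = t₂ ≫ u := pullback.condition
  have scond : (𝟙 G₁) ≫ f₁ = i₁ ≫ u := by rw [h₁]; simp
  set s : G₁ ⟶ pullback f₁ u := pullback.lift (𝟙 G₁) i₁ scond with hs
  have hst₁ : s ≫ t₁ = 𝟙 G₁ := pullback.lift_fst _ _ _
  have hst₂ : s ≫ t₂ = i₁ := pullback.lift_snd _ _ _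
  -- front-left face of the cube
  have FL : IsPullback s (𝟙 G₁) t₂ i₁ := by
    refine myIsPullback_of_up (by rw [hst₂]; simp) (fun a' b' h' => b') ?_
      (by intros; simp) ?_
    · intro Q' a' b' h'
      have hb : a' ≫ t₁ = b' := by
        rw [← cancel_mono f₁, Category.assoc, tw, ← Category.assoc, h', Category.assoc, h₁]
      apply pullback.hom_ext
      · rw [Category.assoc, ← ht₁, hst₁, Category.comp_id, hb]
      · rw [Category.assoc, ← ht₂, hst₂, h']
    · intro Q' m m' _ e; simpa using e
  -- front-right face of the cube
  have FR : IsPullback (p₁ ≫ s) p₂ t₂ i₂ := by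
    have w0 : (p₁ ≫ s) ≫ t₂ = p₂ ≫ i₂ := by rw [Category.assoc, hst₂, sq.w]
    refine myIsPullback_of_up w0
      (fun a' b' h' => pb.lift (a' ≫ t₁) b'
        (by rw [Category.assoc, tw, ← Category.assoc, h', Category.assoc, h₂])) ?_ ?_ ?_
    · intro Q' a' b' h'
      apply pullback.hom_ext
      · rw [Category.assoc, Category.assoc p₁ s, ← ht₁, hst₁, Category.comp_id,
          IsPullback.lift_fst]
      · rw [Category.assoc, w0, ← Category.assoc, IsPullback.lift_snd, ← ht₂, ← h']
    · intro Q' a' b' h'; exact pb.lift_snd _ _ _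
    · intro Q' m m' e₁ e₂
      apply pb.hom_ext
      · have e₁' : m ≫ (p₁ ≫ s) ≫ t₁ = m' ≫ (p₁ ≫ s) ≫ t₁ := by
          rw [← Category.assoc, e₁, Category.assoc]
        simpa only [Category.assoc, ← ht₁, hst₁, Category.comp_id] using e₁'
      · exact e₂
  -- back faces
  have BL : IsPullback p₁ (𝟙 P) (𝟙 G₁) p₁ := IsPullback.of_vert_isIso ⟨by simp⟩
  have BR : IsPullback (𝟙 P) (𝟙 P) p₂ p₂ := IsKernelPair.id_of_mono p₂
  have vk := Adhesive.van_kampen sq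
  have PO : IsPushout p₁ (𝟙 P) s (p₁ ≫ s) :=
    (vk p₁ (𝟙 P) s (p₁ ≫ s) (𝟙 P) (𝟙 G₁) p₂ t₂ BL BR FL.toCommSq FR.toCommSq
      ⟨by simp⟩).mpr ⟨FL, FR⟩
  have hts : t₁ ≫ s = 𝟙 _ := by
    apply PO.hom_ext
    · rw [← Category.assoc, hst₁, Category.id_comp, Category.comp_id]
    · simp only [← Category.assoc]
      rw [Category.assoc p₁ s t₁, hst₁, Category.comp_id, Category.comp_id]
  have ht12 : t₂ = t₁ ≫ i₁ := by
    rw [← hst₂, ← Category.assoc, hts, Category.id_comp]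
  have hl := pullback.lift b a hab.symm
  have := pullback.lift_snd b a hab.symm
  rw [← ht₂] at this
  rw [← this, ht12, ← Category.assoc, ht₁, pullback.lift_fst]


/-- The induced map out of the pushout over the intersection is a monomorphism. -/
theorem union_mono [Adhesive C] {P G₁ G₂ H U : C}
    (p₁ : P ⟶ G₁) (p₂ : P ⟶ G₂) (i₁ : G₁ ⟶ U) (i₂ : G₂ ⟶ U)
    (f₁ : G₁ ⟶ H) (f₂ : G₂ ⟶ H) (u : U ⟶ H) [Mono f₁] [Mono f₂] [Mono p₁] [Mono p₂]
    (sq : IsPushout p₁ p₂ i₁ i₂) (pb : IsPullback p₁ p₂ f₁ f₂)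
    (h₁ : i₁ ≫ u = f₁) (h₂ : i₂ ≫ u = f₂) : Mono u := by
  haveI mi₁ : Mono i₁ := Adhesive.mono_of_isPushout_of_mono_left sq.flip
  haveI mi₂ : Mono i₂ := Adhesive.mono_of_isPushout_of_mono_left sq
  constructor
  intro Z x y hxy
  haveI : HasPullback i₁ x := Adhesive.hasPullback_of_mono_left i₁ x
  haveI : HasPullback i₂ x := Adhesive.hasPullback_of_mono_left i₂ x
  haveI : Mono (p₁ ≫ i₁) := mono_comp _ _
  haveI : HasPullback (p₁ ≫ i₁) x := Adhesive.hasPullback_of_mono_left _ x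
  have A1 : IsPullback (pullback.fst i₁ x) (pullback.snd i₁ x) i₁ x :=
    IsPullback.of_hasPullback i₁ x
  have A2 : IsPullback (pullback.fst i₂ x) (pullback.snd i₂ x) i₂ x :=
    IsPullback.of_hasPullback i₂ x
  have W0 : IsPullback (pullback.fst (p₁ ≫ i₁) x) (pullback.snd (p₁ ≫ i₁) x) (p₁ ≫ i₁) x :=
    IsPullback.of_hasPullback _ x
  have c1 : (pullback.fst (p₁ ≫ i₁) x ≫ p₁) ≫ i₁ = pullback.snd (p₁ ≫ i₁) x ≫ x := by
    rw [Category.assoc]; exact W0.w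
  have c2 : (pullback.fst (p₁ ≫ i₁) x ≫ p₂) ≫ i₂ = pullback.snd (p₁ ≫ i₁) x ≫ x := by
    rw [Category.assoc, ← sq.w, ← Category.assoc]; exact c1
  have ff1 : A1.lift _ _ c1 ≫ pullback.fst i₁ x = pullback.fst (p₁ ≫ i₁) x ≫ p₁ :=
    A1.lift_fst _ _ _
  have fs1 : A1.lift _ _ c1 ≫ pullback.snd i₁ x = pullback.snd (p₁ ≫ i₁) x :=
    A1.lift_snd _ _ _
  have gg2 : A2.lift _ _ c2 ≫ pullback.fst i₂ x = pullback.fst (p₁ ≫ i₁) x ≫ p₂ :=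
    A2.lift_fst _ _ _
  have gs2 : A2.lift _ _ c2 ≫ pullback.snd i₂ x = pullback.snd (p₁ ≫ i₁) x :=
    A2.lift_snd _ _ _
  have big1 : IsPullback (A1.lift _ _ c1 ≫ pullback.snd i₁ x) (pullback.fst (p₁ ≫ i₁) x)
      x (p₁ ≫ i₁) := by rw [fs1]; exact W0.flip
  have big2 : IsPullback (A2.lift _ _ c2 ≫ pullback.snd i₂ x) (pullback.fst (p₁ ≫ i₁) x)
      x (p₂ ≫ i₂) := by rw [gs2, ← sq.w]; exact W0.flip
  have BL : IsPullback (A1.lift _ _ c1) (pullback.fst (p₁ ≫ i₁) x) (pullback.fst i₁ x) p₁ :=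
    IsPullback.of_right big1 ff1 A1.flip
  have BR : IsPullback (A2.lift _ _ c2) (pullback.fst (p₁ ≫ i₁) x) (pullback.fst i₂ x) p₂ :=
    IsPullback.of_right big2 gg2 A2.flip
  have vk := Adhesive.van_kampen sq
  have PO : IsPushout (A1.lift _ _ c1) (A2.lift _ _ c2)
      (pullback.snd i₁ x) (pullback.snd i₂ x) :=
    (vk (A1.lift _ _ c1) (A2.lift _ _ c2) (pullback.snd i₁ x) (pullback.snd i₂ x)
      (pullback.fst (p₁ ≫ i₁) x) (pullback.fst i₁ x) (pullback.fst i₂ x) x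
      BL BR A1.flip.toCommSq A2.flip.toCommSq ⟨by rw [fs1, gs2]⟩).mpr ⟨A1.flip, A2.flip⟩
  apply PO.hom_ext
  · have e1 : pullback.snd i₁ x ≫ x = pullback.fst i₁ x ≫ i₁ := A1.w.symm
    have e2 : pullback.snd i₁ x ≫ y = pullback.fst i₁ x ≫ i₁ := by
      refine union_aux p₁ p₂ i₁ i₂ f₁ f₂ u sq pb h₁ h₂ _ _ ?_
      rw [Category.assoc, ← hxy, ← Category.assoc, e1, Category.assoc, h₁]
    rw [e1, e2]
  · have e1 : pullback.snd i₂ x ≫ x = pullback.fst i₂ x ≫ i₂ := A2.w.symm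
    have e2 : pullback.snd i₂ x ≫ y = pullback.fst i₂ x ≫ i₂ := by
      refine union_aux p₂ p₁ i₂ i₁ f₂ f₁ u sq.flip pb.flip h₂ h₁ _ _ ?_
      rw [Category.assoc, ← hxy, ← Category.assoc, e1, Category.assoc, h₂]
    rw [e1, e2]

/-- Factorization of a cospan of matches through a minimal gluing, uniquely up to
unique isomorphism. -/
theorem factorization_through_minimal_gluing [Adhesive C] {G₁ G₂ H : C}
    (f₁ : G₁ ⟶ H) (f₂ : G₂ ⟶ H) [Mono f₁] [Mono f₂] :
    ∃ (gl : Gluing G₁ G₂) (u : gl.U ⟶ H), gl.Minimal ∧ Mono u ∧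
      gl.i₁ ≫ u = f₁ ∧ gl.i₂ ≫ u = f₂ ∧
      ∀ (gl' : Gluing G₁ G₂) (u' : gl'.U ⟶ H), gl'.Minimal → Mono u' →
        gl'.i₁ ≫ u' = f₁ → gl'.i₂ ≫ u' = f₂ →
        ∃! w : gl.U ≅ gl'.U,
          gl.i₁ ≫ w.hom = gl'.i₁ ∧ gl.i₂ ≫ w.hom = gl'.i₂ ∧ w.hom ≫ u' = u := by
  haveI : HasPullback f₁ f₂ := Adhesive.hasPullback_of_mono_left f₁ f₂
  set p₁ := pullback.fst f₁ f₂ with hp₁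
  set p₂ := pullback.snd f₁ f₂ with hp₂
  haveI : Mono p₁ := inferInstance
  haveI : Mono p₂ := inferInstance
  haveI : HasPushout p₁ p₂ := Adhesive.hasPushout_of_mono_left p₁ p₂
  set i₁ := pushout.inl p₁ p₂ with hi₁
  set i₂ := pushout.inr p₁ p₂ with hi₂
  have sq : IsPushout p₁ p₂ i₁ i₂ := IsPushout.of_hasPushout p₁ p₂
  have pb : IsPullback p₁ p₂ f₁ f₂ := IsPullback.of_hasPullback f₁ f₂
  haveI mi₁ : Mono i₁ := Adhesive.mono_of_isPushout_of_mono_left sq.flip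
  haveI mi₂ : Mono i₂ := Adhesive.mono_of_isPushout_of_mono_left sq
  set u : pushout p₁ p₂ ⟶ H := pushout.desc f₁ f₂ pullback.condition with hu
  have h₁ : i₁ ≫ u = f₁ := pushout.inl_desc _ _ _
  have h₂ : i₂ ≫ u = f₂ := pushout.inr_desc _ _ _
  haveI hmu : Mono u := union_mono p₁ p₂ i₁ i₂ f₁ f₂ u sq pb h₁ h₂
  set gl : Gluing G₁ G₂ := ⟨pushout p₁ p₂, i₁, i₂, mi₁, mi₂⟩ with hgl
  -- minimality
  have hmin : gl.Minimal := by
    intro V m hm hj₁ hj₂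
    obtain ⟨j₁, hj₁⟩ := hj₁
    obtain ⟨j₂, hj₂⟩ := hj₂
    haveI := hm
    have hcond : p₁ ≫ j₁ = p₂ ≫ j₂ := by
      rw [← cancel_mono m, Category.assoc, Category.assoc, hj₁, hj₂]
      exact sq.w
    have hq : pushout.desc j₁ j₂ hcond ≫ m = 𝟙 _ := by
      apply sq.hom_ext
      · rw [← Category.assoc, pushout.inl_desc, hj₁, Category.comp_id]
      · rw [← Category.assoc, pushout.inr_desc, hj₂, Category.comp_id]
    have hq' : m ≫ pushout.desc j₁ j₂ hcond = 𝟙 _ := by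
      rw [← cancel_mono m, Category.assoc, hq, Category.comp_id, Category.id_comp]
    exact ⟨pushout.desc j₁ j₂ hcond, hq', hq⟩
  refine ⟨gl, u, hmin, hmu, h₁, h₂, ?_⟩
  intro gl' u' hmin' hmu' e₁ e₂
  haveI := hmu'
  haveI : HasPullback u u' := Adhesive.hasPullback_of_mono_left u u'
  set v₁ := pullback.fst u u' with hv₁
  set v₂ := pullback.snd u u' with hv₂
  haveI : Mono v₁ := inferInstance
  haveI : Mono v₂ := inferInstance
  have j₁cond : i₁ ≫ u = gl'.i₁ ≫ u' := by rw [h₁, e₁]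
  have j₂cond : i₂ ≫ u = gl'.i₂ ≫ u' := by rw [h₂, e₂]
  set j₁ := pullback.lift i₁ gl'.i₁ j₁cond with hj₁
  set j₂ := pullback.lift i₂ gl'.i₂ j₂cond with hj₂
  have hj₁v₁ : j₁ ≫ v₁ = i₁ := pullback.lift_fst _ _ _
  have hj₂v₁ : j₂ ≫ v₁ = i₂ := pullback.lift_fst _ _ _
  have hj₁v₂ : j₁ ≫ v₂ = gl'.i₁ := pullback.lift_snd _ _ _
  have hj₂v₂ : j₂ ≫ v₂ = gl'.i₂ := pullback.lift_snd _ _ _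
  haveI iso₁ : IsIso v₁ := hmin _ v₁ ‹Mono v₁› ⟨j₁, hj₁v₁⟩ ⟨j₂, hj₂v₁⟩
  haveI iso₂ : IsIso v₂ := hmin' _ v₂ ‹Mono v₂› ⟨j₁, hj₁v₂⟩ ⟨j₂, hj₂v₂⟩
  have pc : v₁ ≫ u = v₂ ≫ u' := pullback.condition
  refine ⟨(asIso v₁).symm ≪≫ asIso v₂, ⟨?_, ?_, ?_⟩, ?_⟩
  · show i₁ ≫ inv v₁ ≫ v₂ = gl'.i₁
    rw [← hj₁v₁, Category.assoc, IsIso.hom_inv_id_assoc, hj₁v₂]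
  · show i₂ ≫ inv v₁ ≫ v₂ = gl'.i₂
    rw [← hj₂v₁, Category.assoc, IsIso.hom_inv_id_assoc, hj₂v₂]
  · show (inv v₁ ≫ v₂) ≫ u' = u
    rw [Category.assoc, ← pc, IsIso.inv_hom_id_assoc]
  · rintro w' ⟨-, -, hw3⟩
    apply Iso.ext
    rw [← cancel_mono u', hw3]
    show u = (inv v₁ ≫ v₂) ≫ u'
    rw [Category.assoc, ← pc, IsIso.inv_hom_id_assoc]
end

section
/- Restriction lemma: Let C be an adhesive category, α : L ⇀ R a rule, and f : L ⟶ G, g : R ⟶ H, g₁ : R ⟶ T matches such that f ⇒[α] g (with some corule) and g₁ is not derivable by α. Then there is no match g₂ : T ⟶ H with g₂ ∘ g₁ = g. -/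
open CategoryTheory Limits

universe v u

variable {C : Type u} [Category.{v} C]

/-- If `m` is a mono, then the square with top `u`, left identity, right `m`,
bottom `u ≫ m` is a pullback. -/
theorem isPullback_id_of_mono' {X Y Z : C} (u : X ⟶ Y) (m : Y ⟶ Z) [Mono m] :
    IsPullback u (𝟙 X) m (u ≫ m) := by
  have s : IsPullback u (𝟙 X) (𝟙 Y) u := IsPullback.of_vert_isIso ⟨by simp⟩
  have t : IsPullback (𝟙 Y) (𝟙 Y) m m := IsKernelPair.id_of_mono m
  simpa using s.paste_horiz t

/-- Restriction lemma: if `f ⇒[α] g` and `g₁` is not derivable by `α`, then the comatch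
`g` does not factor through `g₁` by any match. -/
theorem restriction_lemma [Adhesive C] {L R G H T : C}
    (α : Rule L R) (f : L ⟶ G) (g : R ⟶ H) (g₁ : R ⟶ T)
    [Mono f] [Mono g] [Mono g₁]
    (β : Rule G H) (hd : IsDerivation α f g β)
    (hnd : ¬ Derivable α g₁) :
    ¬ ∃ g₂ : T ⟶ H, Mono g₂ ∧ g₁ ≫ g₂ = g := by
  rintro ⟨g₂, hg₂, hfac⟩
  obtain ⟨h, hmono, hfpbc, hpo⟩ := hd
  haveI := α.mono_left
  haveI := α.mono_right
  haveI := β.mono_left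
  haveI := β.mono_right
  haveI := hmono
  haveI := hg₂
  -- D' is the pullback of β.right along g₂
  let D' := pullback g₂ β.right
  let pT : D' ⟶ T := pullback.fst g₂ β.right
  let pD : D' ⟶ β.K := pullback.snd g₂ β.right
  have hD' : IsPullback pT pD g₂ β.right := IsPullback.of_hasPullback g₂ β.right
  have hcomm : (α.right ≫ g₁) ≫ g₂ = h ≫ β.right := by
    rw [Category.assoc, hfac, hpo.w]
  let h' : α.K ⟶ D' := pullback.lift (α.right ≫ g₁) h hcomm
  have h'T : h' ≫ pT = α.right ≫ g₁ := pullback.lift_fst _ _ _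
  have h'D : h' ≫ pD = h := pullback.lift_snd _ _ _
  haveI hpDm : Mono pD := pullback.snd_of_mono
  haveI hpTm : Mono pT := pullback.fst_of_mono
  haveI hh'm : Mono h' := by
    have : Mono (h' ≫ pD) := by rw [h'D]; infer_instance
    exact mono_of_mono h' pD
  -- the right-hand square of the restricted derivation is a pushout (van Kampen)
  have VK := Adhesive.van_kampen (C := C) hpo
  have hgpb : IsPullback g₁ (𝟙 R) g₂ g := by
    have := isPullback_id_of_mono' g₁ g₂
    rwa [hfac] at this
  have hhpb : IsPullback h' (𝟙 α.K) pD h := by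
    refine IsPullback.of_right ?_ (by simp [h'D]) hD'
    have : IsPullback (α.right ≫ g₁) (𝟙 α.K) g₂ ((α.right ≫ g₁) ≫ g₂) :=
      isPullback_id_of_mono' _ g₂
    rw [hcomm] at this
    rwa [h'T]
  have hpoTop : IsPushout α.right h' g₁ pT :=
    (VK α.right h' g₁ pT (𝟙 _) (𝟙 _) pD g₂
      (IsPullback.of_vert_isIso ⟨by simp⟩) hhpb
      ⟨by simpa using hfac⟩ ⟨hD'.w⟩ ⟨h'T.symm⟩).mpr ⟨hgpb, hD'⟩
  -- the restricted context G' is the pushout of h' along α.left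
  let G' := pushout α.left h'
  let f' : L ⟶ G' := pushout.inl α.left h'
  let β₁' : D' ⟶ G' := pushout.inr α.left h'
  have hpoL : IsPushout α.left h' f' β₁' := IsPushout.of_hasPushout _ _
  haveI hf'm : Mono f' := Adhesive.mono_of_isPushout_of_mono_right hpoL
  haveI hβ₁'m : Mono β₁' := Adhesive.mono_of_isPushout_of_mono_left hpoL
  have hplbL : IsPullback α.left h' f' β₁' :=
    Adhesive.isPullback_of_isPushout_of_mono_left hpoL
  have VK2 := Adhesive.van_kampen (C := C) hpoL
  -- the left-hand square is a final pullback complement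
  have final : ∀ {P Q : C} (f₁' : P ⟶ L) (g₁' : P ⟶ Q) (g₂' : Q ⟶ G'),
      IsPullback f₁' g₁' f' g₂' → ∀ p : P ⟶ α.K, p ≫ α.left = f₁' →
      ∃! u : Q ⟶ D', u ≫ β₁' = g₂' ∧ g₁' ≫ u = p ≫ h' := by
    intro P Q f₁' g₁' g₂' hpb p hp
    let πK := pullback.fst α.left f₁'
    let a := pullback.snd α.left f₁'
    have hKQ : IsPullback πK a α.left f₁' := IsPullback.of_hasPullback _ _
    let ρ := pullback.fst β₁' g₂'
    let q := pullback.snd β₁' g₂'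
    have hDQ : IsPullback ρ q β₁' g₂' := IsPullback.of_hasPullback _ _
    have hcomm2 : (πK ≫ h') ≫ β₁' = (a ≫ g₁') ≫ g₂' := by
      rw [Category.assoc, ← hpoL.w, ← Category.assoc, hKQ.w, Category.assoc, hpb.w,
        ← Category.assoc]
    let g'' : pullback α.left f₁' ⟶ pullback β₁' g₂' :=
      pullback.lift (πK ≫ h') (a ≫ g₁') hcomm2
    have g''ρ : g'' ≫ ρ = πK ≫ h' := pullback.lift_fst _ _ _
    have g''q : g'' ≫ q = a ≫ g₁' := pullback.lift_snd _ _ _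
    have hBig : IsPullback (a ≫ g₁') πK g₂' (α.left ≫ f') :=
      hKQ.flip.paste_horiz hpb.flip
    have hg2 : IsPullback g'' πK ρ h' := by
      refine IsPullback.of_right ?_ g''ρ hDQ.flip
      rw [g''q, ← hpoL.w]
      exact hBig
    have hpoQ : IsPushout a g'' g₁' q :=
      (VK2 a g'' g₁' q πK f₁' ρ g₂' hKQ.flip hg2 ⟨hpb.flip.w⟩ ⟨hDQ.flip.w⟩
        ⟨g''q.symm⟩).mpr ⟨hpb.flip, hDQ.flip⟩
    have hap : a ≫ p = πK := by
      have hw : (a ≫ p) ≫ α.left = πK ≫ α.left := by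
        rw [Category.assoc, hp, ← hKQ.w]
      exact (cancel_mono α.left).mp hw
    have hdesc : a ≫ (p ≫ h') = g'' ≫ ρ := by
      rw [g''ρ, ← Category.assoc, hap]
    refine ⟨hpoQ.desc (p ≫ h') ρ hdesc, ⟨?_, hpoQ.inl_desc _ _ _⟩, ?_⟩
    · apply hpoQ.hom_ext
      · rw [← Category.assoc, hpoQ.inl_desc, Category.assoc, ← hpoL.w, ← Category.assoc,
          hp, hpb.w]
      · rw [← Category.assoc, hpoQ.inr_desc, hDQ.w]
    · rintro y ⟨hy1, hy2⟩
      apply hpoQ.hom_ext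
      · rw [hy2, hpoQ.inl_desc]
      · have : (q ≫ y) ≫ β₁' = (q ≫ hpoQ.desc (p ≫ h') ρ hdesc) ≫ β₁' := by
          rw [Category.assoc, hy1, Category.assoc, ← Category.assoc q, hpoQ.inr_desc,
            hDQ.w]
        exact (cancel_mono β₁').mp this
  exact hnd ⟨G', f', ⟨D', β₁', pT, hβ₁'m, hpTm⟩, hf'm,
    ⟨h', hh'm, ⟨hplbL, final⟩, hpoTop⟩⟩
end

section
/- Counting cospans via minimal gluings (the consumption term): Let C be an adhesive category, G₁, G₂, H objects of C, and M a complete set of representatives of the isomorphism classes of minimal gluings of G₁ and G₂ (i.e., every minimal gluing of G₁ and G₂ is isomorphic to exactly one element of M). Then the map sending a pair (μ, u), where μ = (μ₁ : G₁ ⟶ Û, μ₂ : G₂ ⟶ Û) ∈ M and u ∈ mchs(Û, H), to the cospan (u ∘ μ₁, u ∘ μ₂) is a bijection from Σ_{μ ∈ M} mchs(Û, H) onto mchs(G₁, H) × mchs(G₂, H). In particular, if all the match sets involved are finite and M is finite, then |mchs(G₁, H)| · |mchs(G₂, H)| = Σ_{μ ∈ M} |mchs(Û, H)|. -/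
open CategoryTheory Limits

universe v u

variable {C : Type u} [Category.{v} C]

section Aux

variable {C : Type u} [Category.{v} C]

/-- Cancel a mono on the right of both legs of a pullback square. -/
lemma pb_of_mono {P G₁ G₂ U H : C} {p₁ : P ⟶ G₁} {p₂ : P ⟶ G₂} {i₁ : G₁ ⟶ U} {i₂ : G₂ ⟶ U}
    (m : U ⟶ H) [Mono m] (h : IsPullback p₁ p₂ (i₁ ≫ m) (i₂ ≫ m)) :
    IsPullback p₁ p₂ i₁ i₂ := by
  have w : p₁ ≫ i₁ = p₂ ≫ i₂ := by
    rw [← cancel_mono m]; simpa only [Category.assoc] using h.w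
  exact IsPullback.of_isLimit (PullbackCone.IsLimit.mk w
    (fun s => h.lift s.fst s.snd (by rw [← Category.assoc, s.condition, Category.assoc]))
    (fun s => h.lift_fst _ _ _) (fun s => h.lift_snd _ _ _)
    (fun s n hn₁ hn₂ => h.hom_ext (by rw [h.lift_fst]; exact hn₁)
      (by rw [h.lift_snd]; exact hn₂)))

lemma mono_fst_of_pb {P G₁ G₂ U : C} {p₁ : P ⟶ G₁} {p₂ : P ⟶ G₂} {i₁ : G₁ ⟶ U} {i₂ : G₂ ⟶ U}
    (h : IsPullback p₁ p₂ i₁ i₂) [Mono i₂] : Mono p₁ := by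
  constructor
  intro T a b hab
  have hb : a ≫ p₂ = b ≫ p₂ := by
    rw [← cancel_mono i₂]
    simp only [Category.assoc, ← h.w]
    rw [← Category.assoc, hab, Category.assoc]
  exact h.hom_ext hab hb

/-- Pulling back a pushout-along-monos square along any morphism into the pushout
yields a (jointly epimorphic) cover, by the van Kampen property. -/
lemma pushout_cover [Adhesive C] {P G₁ G₂ Q : C} {p₁ : P ⟶ G₁} {p₂ : P ⟶ G₂}
    {l₁ : G₁ ⟶ Q} {l₂ : G₂ ⟶ Q} [Mono p₁] [Mono p₂]
    (hpo : IsPushout p₁ p₂ l₁ l₂) {T : C} (b : T ⟶ Q) :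
    ∃ (T₁ T₂ : C) (s₁ : T₁ ⟶ T) (s₂ : T₂ ⟶ T) (c₁ : T₁ ⟶ G₁) (c₂ : T₂ ⟶ G₂),
      s₁ ≫ b = c₁ ≫ l₁ ∧ s₂ ≫ b = c₂ ≫ l₂ ∧
      ∀ {X : C} (x y : T ⟶ X), s₁ ≫ x = s₁ ≫ y → s₂ ≫ x = s₂ ≫ y → x = y := by
  haveI hl₁ : Mono l₁ := Adhesive.mono_of_isPushout_of_mono_right hpo
  haveI hl₂ : Mono l₂ := Adhesive.mono_of_isPushout_of_mono_left hpo
  haveI : Mono (p₁ ≫ l₁) := mono_comp _ _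
  have front₁ : IsPullback (pullback.fst l₁ b) (pullback.snd l₁ b) l₁ b :=
    IsPullback.of_hasPullback _ _
  have front₂ : IsPullback (pullback.fst l₂ b) (pullback.snd l₂ b) l₂ b :=
    IsPullback.of_hasPullback _ _
  have big : IsPullback (pullback.fst (p₁ ≫ l₁) b) (pullback.snd (p₁ ≫ l₁) b) (p₁ ≫ l₁) b :=
    IsPullback.of_hasPullback _ _
  have big₂ : IsPullback (pullback.fst (p₁ ≫ l₁) b) (pullback.snd (p₁ ≫ l₁) b) (p₂ ≫ l₂) b := by
    rw [← hpo.w]; exact big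
  have side₁ := IsPullback.of_right' big.flip front₁.flip
  have side₂ := IsPullback.of_right' big₂.flip front₂.flip
  have hq₁ := front₁.flip.lift_fst (pullback.snd (p₁ ≫ l₁) b)
    (pullback.fst (p₁ ≫ l₁) b ≫ p₁) (by rw [big.flip.w, Category.assoc])
  have hq₂ := front₂.flip.lift_fst (pullback.snd (p₁ ≫ l₁) b)
    (pullback.fst (p₁ ≫ l₁) b ≫ p₂) (by rw [big₂.flip.w, Category.assoc])
  have key := (Adhesive.van_kampen hpo _ _ _ _ _ _ _ b side₁ side₂
    ⟨front₁.w.symm⟩ ⟨front₂.w.symm⟩ ⟨hq₁.trans hq₂.symm⟩).mpr ⟨front₁.flip, front₂.flip⟩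
  exact ⟨pullback l₁ b, pullback l₂ b, pullback.snd l₁ b, pullback.snd l₂ b,
    pullback.fst l₁ b, pullback.fst l₂ b, front₁.w.symm, front₂.w.symm,
    fun x y hx hy => key.hom_ext hx hy⟩

/-- Anything landing in the pushout whose composite with the comparison map factors
through `i₁` already factors through `l₁`. -/
lemma factor_through_inl [Adhesive C] {P G₁ G₂ U Q : C} {p₁ : P ⟶ G₁} {p₂ : P ⟶ G₂}
    {i₁ : G₁ ⟶ U} {i₂ : G₂ ⟶ U} [Mono i₁] [Mono i₂]
    (hpb : IsPullback p₁ p₂ i₁ i₂) {l₁ : G₁ ⟶ Q} {l₂ : G₂ ⟶ Q}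
    (hpo : IsPushout p₁ p₂ l₁ l₂) {t : Q ⟶ U} (ht₁ : l₁ ≫ t = i₁) (ht₂ : l₂ ≫ t = i₂)
    {T : C} (c : T ⟶ G₁) (b : T ⟶ Q) (h : b ≫ t = c ≫ i₁) : b = c ≫ l₁ := by
  haveI : Mono p₁ := mono_fst_of_pb hpb
  haveI : Mono p₂ := mono_fst_of_pb hpb.flip
  obtain ⟨T₁, T₂, s₁, s₂, c₁, c₂, e₁, e₂, jepi⟩ := pushout_cover hpo b
  apply jepi
  · have hc : s₁ ≫ c = c₁ := by
      rw [← cancel_mono i₁, Category.assoc, ← h, ← Category.assoc, e₁,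
        Category.assoc, ht₁]
    rw [e₁, ← hc, Category.assoc]
  · have hcone : (s₂ ≫ c) ≫ i₁ = c₂ ≫ i₂ := by
      rw [Category.assoc, ← h, ← Category.assoc, e₂, Category.assoc, ht₂]
    have h₁ := hpb.lift_fst (s₂ ≫ c) c₂ hcone
    have h₂ := hpb.lift_snd (s₂ ≫ c) c₂ hcone
    rw [e₂, ← h₂, Category.assoc, ← hpo.w, ← Category.assoc, h₁, Category.assoc]

/-- The comparison map from the pushout over the pullback of two monos is a mono. -/
lemma comparison_mono [Adhesive C] {P G₁ G₂ U Q : C} {p₁ : P ⟶ G₁} {p₂ : P ⟶ G₂}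
    {i₁ : G₁ ⟶ U} {i₂ : G₂ ⟶ U} [Mono i₁] [Mono i₂]
    (hpb : IsPullback p₁ p₂ i₁ i₂) {l₁ : G₁ ⟶ Q} {l₂ : G₂ ⟶ Q}
    (hpo : IsPushout p₁ p₂ l₁ l₂) {t : Q ⟶ U} (ht₁ : l₁ ≫ t = i₁) (ht₂ : l₂ ≫ t = i₂) :
    Mono t := by
  haveI : Mono p₁ := mono_fst_of_pb hpb
  haveI : Mono p₂ := mono_fst_of_pb hpb.flip
  constructor
  intro T a b hab
  obtain ⟨T₁, T₂, s₁, s₂, c₁, c₂, e₁, e₂, jepi⟩ := pushout_cover hpo a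
  apply jepi
  · have : s₁ ≫ b = c₁ ≫ l₁ := by
      refine factor_through_inl hpb hpo ht₁ ht₂ c₁ (s₁ ≫ b) ?_
      rw [Category.assoc, ← hab, ← Category.assoc, e₁, Category.assoc, ht₁]
    rw [e₁, this]
  · have : s₂ ≫ b = c₂ ≫ l₂ := by
      refine factor_through_inl hpb.flip hpo.flip ht₂ ht₁ c₂ (s₂ ≫ b) ?_
      rw [Category.assoc, ← hab, ← Category.assoc, e₂, Category.assoc, ht₂]
    rw [e₂, this]

/-- Existence of a minimal gluing with a monic mediating morphism, for any cospan
of monos: pushout over the pullback. -/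
lemma min_glue [Adhesive C] {G₁ G₂ H : C} (f₁ : G₁ ⟶ H) (f₂ : G₂ ⟶ H)
    [Mono f₁] [Mono f₂] :
    ∃ (gl : Gluing G₁ G₂) (u : gl.U ⟶ H),
      gl.Minimal ∧ Mono u ∧ gl.i₁ ≫ u = f₁ ∧ gl.i₂ ≫ u = f₂ := by
  have hpb : IsPullback (pullback.fst f₁ f₂) (pullback.snd f₁ f₂) f₁ f₂ :=
    IsPullback.of_hasPullback _ _
  have hpo : IsPushout (pullback.fst f₁ f₂) (pullback.snd f₁ f₂)
      (pushout.inl _ _) (pushout.inr _ _) := IsPushout.of_hasPushout _ _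
  haveI hm₁ : Mono (pushout.inl (pullback.fst f₁ f₂) (pullback.snd f₁ f₂)) :=
    Adhesive.mono_of_isPushout_of_mono_right hpo
  haveI hm₂ : Mono (pushout.inr (pullback.fst f₁ f₂) (pullback.snd f₁ f₂)) :=
    Adhesive.mono_of_isPushout_of_mono_left hpo
  refine ⟨⟨pushout _ _, pushout.inl _ _, pushout.inr _ _, hm₁, hm₂⟩,
    pushout.desc f₁ f₂ pullback.condition, ?_, ?_, pushout.inl_desc _ _ _,
    pushout.inr_desc _ _ _⟩
  · intro V m hm ⟨j₁, hj₁⟩ ⟨j₂, hj₂⟩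
    have hcond : pullback.fst f₁ f₂ ≫ j₁ = pullback.snd f₁ f₂ ≫ j₂ := by
      rw [← cancel_mono m]
      simp only [Category.assoc, hj₁, hj₂]
      exact pushout.condition
    haveI : IsSplitEpi m := ⟨⟨⟨pushout.desc j₁ j₂ hcond, by
      apply pushout.hom_ext
      · rw [← Category.assoc, pushout.inl_desc, Category.comp_id]; exact hj₁
      · rw [← Category.assoc, pushout.inr_desc, Category.comp_id]; exact hj₂⟩⟩⟩
    exact isIso_of_mono_of_isSplitEpi m
  · exact comparison_mono hpb hpo (pushout.inl_desc _ _ _) (pushout.inr_desc _ _ _)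

/-- The legs of a minimal gluing admitting a monic map to some object are jointly epic. -/
lemma minimal_jointly_epi [Adhesive C] {G₁ G₂ : C} (gl : Gluing G₁ G₂) (hmin : gl.Minimal)
    {H : C} (u : gl.U ⟶ H) (hu : Mono u) {X : C} (x y : gl.U ⟶ X)
    (h₁ : gl.i₁ ≫ x = gl.i₁ ≫ y) (h₂ : gl.i₂ ≫ x = gl.i₂ ≫ y) : x = y := by
  haveI := gl.mono₁; haveI := gl.mono₂; haveI := hu
  haveI : Mono (gl.i₁ ≫ u) := mono_comp _ _
  haveI : Mono (gl.i₂ ≫ u) := mono_comp _ _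
  have hpb : IsPullback (pullback.fst (gl.i₁ ≫ u) (gl.i₂ ≫ u))
      (pullback.snd (gl.i₁ ≫ u) (gl.i₂ ≫ u)) gl.i₁ gl.i₂ :=
    pb_of_mono u (IsPullback.of_hasPullback _ _)
  haveI : Mono (pullback.fst (gl.i₁ ≫ u) (gl.i₂ ≫ u)) := mono_fst_of_pb hpb
  have hpo : IsPushout (pullback.fst (gl.i₁ ≫ u) (gl.i₂ ≫ u))
      (pullback.snd (gl.i₁ ≫ u) (gl.i₂ ≫ u)) (pushout.inl _ _) (pushout.inr _ _) :=
    IsPushout.of_hasPushout _ _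
  have ht₁ : pushout.inl _ _ ≫ pushout.desc gl.i₁ gl.i₂ hpb.w = gl.i₁ :=
    pushout.inl_desc _ _ _
  have ht₂ : pushout.inr _ _ ≫ pushout.desc gl.i₁ gl.i₂ hpb.w = gl.i₂ :=
    pushout.inr_desc _ _ _
  haveI : Mono (pushout.desc gl.i₁ gl.i₂ hpb.w) := comparison_mono hpb hpo ht₁ ht₂
  haveI : IsIso (pushout.desc gl.i₁ gl.i₂ hpb.w) :=
    hmin _ _ this ⟨pushout.inl _ _, ht₁⟩ ⟨pushout.inr _ _, ht₂⟩
  rw [← cancel_epi (pushout.desc gl.i₁ gl.i₂ hpb.w)]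
  apply pushout.hom_ext
  · rw [← Category.assoc, ← Category.assoc, ht₁]; exact h₁
  · rw [← Category.assoc, ← Category.assoc, ht₂]; exact h₂

/-- Two minimal gluings that factor the same cospan of matches monically are isomorphic
as gluings. -/
lemma min_factor_iso [Adhesive C] {G₁ G₂ H : C} (gl gl' : Gluing G₁ G₂)
    (hgl : gl.Minimal) (hgl' : gl'.Minimal) {u : gl.U ⟶ H} {u' : gl'.U ⟶ H}
    (hu : Mono u) (hu' : Mono u')
    (e₁ : gl.i₁ ≫ u = gl'.i₁ ≫ u') (e₂ : gl.i₂ ≫ u = gl'.i₂ ≫ u') : GluingIso gl gl' := by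
  haveI := gl.mono₁; haveI := gl.mono₂; haveI := gl'.mono₁; haveI := gl'.mono₂
  haveI := hu; haveI := hu'
  haveI : Mono (gl.i₁ ≫ u) := mono_comp _ _
  haveI : Mono (gl.i₂ ≫ u) := mono_comp _ _
  have hpbH : IsPullback (pullback.fst (gl.i₁ ≫ u) (gl.i₂ ≫ u))
      (pullback.snd (gl.i₁ ≫ u) (gl.i₂ ≫ u)) (gl.i₁ ≫ u) (gl.i₂ ≫ u) :=
    IsPullback.of_hasPullback _ _
  have hpbH' : IsPullback (pullback.fst (gl.i₁ ≫ u) (gl.i₂ ≫ u))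
      (pullback.snd (gl.i₁ ≫ u) (gl.i₂ ≫ u)) (gl'.i₁ ≫ u') (gl'.i₂ ≫ u') := by
    rw [← e₁, ← e₂]; exact hpbH
  have hpb : IsPullback (pullback.fst (gl.i₁ ≫ u) (gl.i₂ ≫ u))
      (pullback.snd (gl.i₁ ≫ u) (gl.i₂ ≫ u)) gl.i₁ gl.i₂ := pb_of_mono u hpbH
  have hpb' : IsPullback (pullback.fst (gl.i₁ ≫ u) (gl.i₂ ≫ u))
      (pullback.snd (gl.i₁ ≫ u) (gl.i₂ ≫ u)) gl'.i₁ gl'.i₂ := pb_of_mono u' hpbH'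
  haveI : Mono (pullback.fst (gl.i₁ ≫ u) (gl.i₂ ≫ u)) := mono_fst_of_pb hpb
  have hpo : IsPushout (pullback.fst (gl.i₁ ≫ u) (gl.i₂ ≫ u))
      (pullback.snd (gl.i₁ ≫ u) (gl.i₂ ≫ u)) (pushout.inl _ _) (pushout.inr _ _) :=
    IsPushout.of_hasPushout _ _
  set t := pushout.desc gl.i₁ gl.i₂ hpb.w with hdef_t
  set t' := pushout.desc gl'.i₁ gl'.i₂ hpb'.w with hdef_t'
  have ht₁ : pushout.inl _ _ ≫ t = gl.i₁ := pushout.inl_desc _ _ _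
  have ht₂ : pushout.inr _ _ ≫ t = gl.i₂ := pushout.inr_desc _ _ _
  have ht₁' : pushout.inl _ _ ≫ t' = gl'.i₁ := pushout.inl_desc _ _ _
  have ht₂' : pushout.inr _ _ ≫ t' = gl'.i₂ := pushout.inr_desc _ _ _
  haveI : Mono t := comparison_mono hpb hpo ht₁ ht₂
  haveI : Mono t' := comparison_mono hpb' hpo ht₁' ht₂'
  haveI : IsIso t := hgl _ _ ‹Mono t› ⟨pushout.inl _ _, ht₁⟩ ⟨pushout.inr _ _, ht₂⟩
  haveI : IsIso t' := hgl' _ _ ‹Mono t'› ⟨pushout.inl _ _, ht₁'⟩ ⟨pushout.inr _ _, ht₂'⟩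
  refine ⟨(asIso t).symm ≪≫ asIso t', ?_, ?_⟩
  · have h : gl.i₁ ≫ inv t = pushout.inl _ _ := by
      rw [IsIso.comp_inv_eq]; exact ht₁.symm
    simp only [Iso.trans_hom, Iso.symm_hom, asIso_inv, asIso_hom, ← Category.assoc, h]
    exact ht₁'
  · have h : gl.i₂ ≫ inv t = pushout.inr _ _ := by
      rw [IsIso.comp_inv_eq]; exact ht₂.symm
    simp only [Iso.trans_hom, Iso.symm_hom, asIso_inv, asIso_hom, ← Category.assoc, h]
    exact ht₂'

end Aux

/-- Counting cospans of matches via minimal gluings (the consumption term). -/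
theorem counting_cospans_via_minimal_gluings [Adhesive C] {G₁ G₂ H : C}
    {ι : Type} [Fintype ι] (M : ι → Gluing G₁ G₂)
    (hmin : ∀ i, (M i).Minimal)
    (hrep : ∀ gl : Gluing G₁ G₂, gl.Minimal → ∃! i : ι, GluingIso gl (M i)) :
    Function.Bijective
      (fun p : Σ i : ι, Mchs (M i).U H =>
        ((⟨(M p.1).i₁ ≫ p.2.1, by
            haveI := (M p.1).mono₁; haveI := p.2.2; exact inferInstance⟩,
          ⟨(M p.1).i₂ ≫ p.2.1, by
            haveI := (M p.1).mono₂; haveI := p.2.2; exact inferInstance⟩) :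
          Mchs G₁ H × Mchs G₂ H)) ∧
    (Finite (Mchs G₁ H) → Finite (Mchs G₂ H) →
      Nat.card (Mchs G₁ H) * Nat.card (Mchs G₂ H) =
        ∑ i : ι, Nat.card (Mchs (M i).U H)) := by
  have hbij : Function.Bijective
      (fun p : Σ i : ι, Mchs (M i).U H =>
        ((⟨(M p.1).i₁ ≫ p.2.1, by
            haveI := (M p.1).mono₁; haveI := p.2.2; exact inferInstance⟩,
          ⟨(M p.1).i₂ ≫ p.2.1, by
            haveI := (M p.1).mono₂; haveI := p.2.2; exact inferInstance⟩) :
          Mchs G₁ H × Mchs G₂ H)) := by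
    constructor
    · rintro ⟨i, u, hu⟩ ⟨j, v, hv⟩ h
      simp only [Prod.mk.injEq, Subtype.mk.injEq] at h
      have giso : GluingIso (M i) (M j) :=
        min_factor_iso (M i) (M j) (hmin i) (hmin j) hu hv h.1 h.2
      obtain ⟨k, -, hkuniq⟩ := hrep (M i) (hmin i)
      have hij : i = j :=
        (hkuniq i ⟨Iso.refl _, by simp, by simp⟩).trans (hkuniq j giso).symm
      subst hij
      have huv : u = v := minimal_jointly_epi (M i) (hmin i) u hu u v h.1 h.2
      subst huv
      rfl
    · rintro ⟨⟨f₁, hf₁⟩, ⟨f₂, hf₂⟩⟩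
      haveI := hf₁; haveI := hf₂
      obtain ⟨gl, u₀, hglmin, hu₀, hu₁, hu₂⟩ := min_glue f₁ f₂
      obtain ⟨i, ⟨φ, hφ₁, hφ₂⟩, -⟩ := hrep gl hglmin
      haveI : Mono u₀ := hu₀
      refine ⟨⟨i, φ.inv ≫ u₀, mono_comp _ _⟩, ?_⟩
      refine Prod.ext (Subtype.ext ?_) (Subtype.ext ?_)
      · show (M i).i₁ ≫ φ.inv ≫ u₀ = f₁
        rw [← hφ₁]; simp [hu₁]
      · show (M i).i₂ ≫ φ.inv ≫ u₀ = f₂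
        rw [← hφ₂]; simp [hu₂]
  refine ⟨hbij, ?_⟩
  intro h₁ h₂
  haveI := h₁; haveI := h₂
  haveI hfs : Finite (Σ i : ι, Mchs (M i).U H) :=
    Finite.of_injective _ hbij.injective
  haveI hfi : ∀ i, Finite (Mchs (M i).U H) :=
    fun i => Finite.of_injective (@Sigma.mk ι (fun j => Mchs (M j).U H) i) sigma_mk_injective
  classical
  haveI : Fintype (Mchs G₁ H) := Fintype.ofFinite _
  haveI : Fintype (Mchs G₂ H) := Fintype.ofFinite _
  haveI : ∀ i, Fintype (Mchs (M i).U H) := fun i => Fintype.ofFinite _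
  calc Nat.card (Mchs G₁ H) * Nat.card (Mchs G₂ H)
      = Nat.card (Mchs G₁ H × Mchs G₂ H) := (Nat.card_prod _ _).symm
    _ = Nat.card (Σ i : ι, Mchs (M i).U H) := (Nat.card_eq_of_bijective _ hbij).symm
    _ = ∑ i : ι, Nat.card (Mchs (M i).U H) := by
        simp only [Nat.card_eq_fintype_card]
        exact Fintype.card_sigma
end

section
/- The production term of the rate matrix: Let C be an adhesive category in which every composable pair of monomorphisms has an FPBC. Fix a rule α : L ⇀ R and objects F and G. Let M_R be a complete set of representatives of the isomorphism classes of minimal gluings of R and F, assumed finite, and let RMG ⊆ M_R be the set of those μ = (μ₁ : R ⟶ μ̂, μ₂ : F ⟶ μ̂) whose first leg μ₁ is derivable by α. For each μ ∈ RMG fix a derivation μ₁ ⇒[α†] d_μ with comatch d_μ : L ⟶ S_μ, and for each match f ∈ mchs(L, G) fix a derivation f ⇒[α] α(f) with comatch α(f) : R ⟶ H_f. Assume mchs(L, G), each mchs(F, H_f), and each mchs(S_μ, G) are finite. Then Σ_{f ∈ mchs(L, G)} |mchs(F, H_f)| = Σ_{μ ∈ RMG} |mchs(S_μ, G)|. 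-/
open CategoryTheory Limits

universe v u

variable {C : Type u} [Category.{v} C]

namespace ProdTerm

/-- If `c` is mono, the square with identity on the left is a pullback. -/
lemma isPullback_id_of_mono {A B T : C} (a : A ⟶ B) (c : B ⟶ T) [Mono c] :
    IsPullback a (𝟙 A) c (a ≫ c) := by
  refine IsPullback.of_isLimit' ⟨by simp⟩ ?_
  refine PullbackCone.IsLimit.mk _ (fun s => s.snd) (fun s => ?_) (fun s => by simp) ?_
  · have := s.condition
    rw [← cancel_mono c, this, Category.assoc]
  · intro s m h1 h2
    simpa using h2

lemma isPullback_id_of_mono' {A B T : C} (a : A ⟶ B) (c : B ⟶ T) (b : A ⟶ T) [Mono c]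
    (w : a ≫ c = b) : IsPullback a (𝟙 A) c b := by
  subst w; exact isPullback_id_of_mono a c

/-- Composing the cospan of a pullback square with a mono preserves the pullback. -/
lemma IsPullback.comp_mono {P X Y Z T : C} {p : P ⟶ X} {q : P ⟶ Y} {f : X ⟶ Z} {g : Y ⟶ Z}
    (H : IsPullback p q f g) (n : Z ⟶ T) [Mono n] : IsPullback p q (f ≫ n) (g ≫ n) := by
  refine IsPullback.of_isLimit' ⟨by rw [← Category.assoc, H.w, Category.assoc]⟩ ?_
  refine PullbackCone.IsLimit.mk _
    (fun s => H.lift s.fst s.snd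
      (by rw [← cancel_mono n, Category.assoc, Category.assoc]; exact s.condition))
    (fun s => by simp) (fun s => by simp) ?_
  intro s m h1 h2
  apply H.hom_ext <;> simp_all

/-- Cancelling a mono inside the left leg of a pullback square. -/
lemma IsPullback.cancel_comp {P X D Y Z : C} {p : P ⟶ X} {k : P ⟶ D} {q : D ⟶ Y}
    {f : X ⟶ Z} {g : Y ⟶ Z} (H : IsPullback p (k ≫ q) f g) [Mono q] :
    IsPullback p k f (q ≫ g) := by
  refine IsPullback.of_isLimit' ⟨by rw [H.w, Category.assoc]⟩ ?_
  refine PullbackCone.IsLimit.mk _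
    (fun s => H.lift s.fst (s.snd ≫ q) (by rw [s.condition, Category.assoc])) (fun s => by simp)
    (fun s => ?_) ?_
  · rw [← cancel_mono q]
    simpa using H.lift_snd s.fst (s.snd ≫ q) (by rw [s.condition, Category.assoc])
  · intro s m h1 h2
    apply H.hom_ext
    · simpa using h1
    · rw [H.lift_snd]
      simp only [← Category.assoc]
      rw [h2]

lemma mono_fst_of_isPullback {P X Y Z : C} {p : P ⟶ X} {q : P ⟶ Y} {f : X ⟶ Z} {g : Y ⟶ Z}
    (H : IsPullback p q f g) [Mono g] : Mono p := by
  constructor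
  intro T x y h
  apply H.hom_ext h
  rw [← cancel_mono g, Category.assoc, Category.assoc, ← H.w, ← Category.assoc, h, Category.assoc]

lemma mono_snd_of_isPullback {P X Y Z : C} {p : P ⟶ X} {q : P ⟶ Y} {f : X ⟶ Z} {g : Y ⟶ Z}
    (H : IsPullback p q f g) [Mono f] : Mono q :=
  mono_fst_of_isPullback H.flip
lemma isPullback_lift {A Z Q P K' W : C} {F : A ⟶ Z} {G : Q ⟶ Z} {p₁ : P ⟶ A} {p₂ : P ⟶ Q}
    {m : W ⟶ A} {r₁ : K' ⟶ W} {r₂ : K' ⟶ Q} {ℓ : K' ⟶ P}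
    (hP : IsPullback p₁ p₂ F G) (hK : IsPullback r₁ r₂ (m ≫ F) G)
    (h₁ : ℓ ≫ p₁ = r₁ ≫ m) (h₂ : ℓ ≫ p₂ = r₂) :
    IsPullback ℓ r₁ p₁ m := by
  refine IsPullback.of_isLimit' ⟨h₁⟩ ?_
  refine PullbackCone.IsLimit.mk _
    (fun s => hK.lift s.snd (s.fst ≫ p₂)
      (by rw [← Category.assoc, ← s.condition, Category.assoc, Category.assoc, hP.w]))
    (fun s => ?_) (fun s => by simp) ?_
  · apply hP.hom_ext
    · rw [Category.assoc, h₁, ← Category.assoc, hK.lift_fst]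
      exact s.condition.symm
    · rw [Category.assoc, h₂, hK.lift_snd]
  · intro s m' h1 h2
    apply hK.hom_ext
    · rw [hK.lift_fst, h2]
    · rw [hK.lift_snd, ← h1, Category.assoc, h₂]

/-- Pulling back a pushout-along-monos square along `g : V ⟶ Z` yields a jointly epic
covering of `V` by the pullbacks of the two cospan legs. -/
lemma decomp [Adhesive C] {W X Y Z V : C} {a : W ⟶ X} {b : W ⟶ Y} {c : X ⟶ Z} {d : Y ⟶ Z}
    (H : IsPushout a b c d) [Mono a] [Mono b] (g : V ⟶ Z) :
    ∃ (X₂ Y₂ : C) (x₂ : X₂ ⟶ X) (hx : X₂ ⟶ V) (y₂ : Y₂ ⟶ Y) (hy : Y₂ ⟶ V),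
      hx ≫ g = x₂ ≫ c ∧ hy ≫ g = y₂ ≫ d ∧
      ∀ {Z' : C} (u v : V ⟶ Z'), hx ≫ u = hx ≫ v → hy ≫ u = hy ≫ v → u = v := by
  have mc : Mono c := Adhesive.mono_of_isPushout_of_mono_right H
  have md : Mono d := Adhesive.mono_of_isPushout_of_mono_left H
  have mac : Mono (a ≫ c) := mono_comp _ _
  let X₂ := pullback c g
  let Y₂ := pullback d g
  let W₂ := pullback (a ≫ c) g
  have hpX : IsPullback (pullback.fst c g) (pullback.snd c g) c g := IsPullback.of_hasPullback c g
  have hpY : IsPullback (pullback.fst d g) (pullback.snd d g) d g := IsPullback.of_hasPullback d g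
  have hpW : IsPullback (pullback.fst (a ≫ c) g) (pullback.snd (a ≫ c) g) (a ≫ c) g :=
    IsPullback.of_hasPullback _ g
  have hpW' : IsPullback (pullback.fst (a ≫ c) g) (pullback.snd (a ≫ c) g) (b ≫ d) g :=
    H.w ▸ hpW
  let f' : W₂ ⟶ X₂ := hpX.lift (pullback.fst _ _ ≫ a) (pullback.snd _ _)
    (by rw [Category.assoc, hpW.w])
  let g' : W₂ ⟶ Y₂ := hpY.lift (pullback.fst _ _ ≫ b) (pullback.snd _ _)
    (by rw [Category.assoc, hpW'.w])
  have back1 : IsPullback f' (pullback.fst (a ≫ c) g) (pullback.fst c g) a :=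
    isPullback_lift hpX hpW (hpX.lift_fst _ _ _) (hpX.lift_snd _ _ _)
  have back2 : IsPullback g' (pullback.fst (a ≫ c) g) (pullback.fst d g) b :=
    isPullback_lift hpY hpW' (hpY.lift_fst _ _ _) (hpY.lift_snd _ _ _)
  have top : IsPushout f' g' (pullback.snd c g) (pullback.snd d g) := by
    refine (Adhesive.van_kampen H f' g' (pullback.snd c g) (pullback.snd d g)
      (pullback.fst (a ≫ c) g) (pullback.fst c g) (pullback.fst d g) g back1 back2
      ⟨hpX.w.symm⟩ ⟨hpY.w.symm⟩
      ⟨by rw [hpX.lift_snd, hpY.lift_snd]⟩).mpr ⟨hpX.flip, hpY.flip⟩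
  exact ⟨X₂, Y₂, pullback.fst c g, pullback.snd c g, pullback.fst d g, pullback.snd d g,
    hpX.w.symm, hpY.w.symm, fun u v h1 h2 => top.hom_ext h1 h2⟩

section Union

variable [Adhesive C]

/-- Key step for the union lemma: any map into the pushout that agrees with a map
through `X` after composing with `e` already factors as claimed. -/
lemma union_aux {W X Y Z T V : C} {a : W ⟶ X} {b : W ⟶ Y} {c : X ⟶ Z} {d : Y ⟶ Z}
    {t₁ : X ⟶ T} {t₂ : Y ⟶ T} {e : Z ⟶ T}
    (H : IsPushout a b c d) [Mono a] [Mono b] [Mono t₁] [Mono t₂]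
    (hpb : IsPullback a b t₁ t₂) (he₁ : c ≫ e = t₁) (he₂ : d ≫ e = t₂)
    (g : V ⟶ Z) (φ : V ⟶ X) (hg : g ≫ e = φ ≫ t₁) : g = φ ≫ c := by
  obtain ⟨X₂, Y₂, x₂, hx, y₂, hy, e₁, e₂, jointEpi⟩ := decomp H g
  refine jointEpi _ _ ?_ ?_
  · have hxφ : hx ≫ φ = x₂ := by
      rw [← cancel_mono t₁, Category.assoc, ← hg, ← Category.assoc, e₁, Category.assoc, he₁]
    rw [e₁, ← Category.assoc, hxφ]
  · have hyc : (hy ≫ φ) ≫ t₁ = y₂ ≫ t₂ := by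
      rw [Category.assoc, ← hg, ← Category.assoc, e₂, Category.assoc, he₂]
    rw [e₂, ← Category.assoc, ← hpb.lift_snd (hy ≫ φ) y₂ hyc, Category.assoc, ← H.w,
      ← Category.assoc, hpb.lift_fst (hy ≫ φ) y₂ hyc, Category.assoc]

/-- The comparison map from a pushout-over-pullback of monos to any mono cospan is mono
(Lack–Sobociński: adhesive categories have unions). -/
lemma mono_union {W X Y Z T : C} {a : W ⟶ X} {b : W ⟶ Y} {c : X ⟶ Z} {d : Y ⟶ Z}
    {t₁ : X ⟶ T} {t₂ : Y ⟶ T} {e : Z ⟶ T}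
    (H : IsPushout a b c d) [Mono a] [Mono b] [Mono t₁] [Mono t₂]
    (hpb : IsPullback a b t₁ t₂) (he₁ : c ≫ e = t₁) (he₂ : d ≫ e = t₂) : Mono e := by
  constructor
  intro V x y hxy
  obtain ⟨X₂, Y₂, x₂, hx, y₂, hy, e₁, e₂, jointEpi⟩ := decomp H x
  refine jointEpi _ _ ?_ ?_
  · rw [e₁]
    refine (union_aux H hpb he₁ he₂ (hx ≫ y) x₂ ?_).symm
    rw [Category.assoc, ← hxy, ← Category.assoc, e₁, Category.assoc, he₁]
  · rw [e₂]
    refine (union_aux H.flip hpb.flip he₂ he₁ (hy ≫ y) y₂ ?_).symm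
    rw [Category.assoc, ← hxy, ← Category.assoc, e₂, Category.assoc, he₂]

end Union



section UnionPkg

variable [Adhesive C]

/-- Existence of the union (a minimal gluing) below any mono cospan. -/
lemma union_exists {X Y T : C} (t₁ : X ⟶ T) (t₂ : Y ⟶ T) [Mono t₁] [Mono t₂] :
    ∃ (gl : Gluing X Y) (e : gl.U ⟶ T), Mono e ∧ gl.i₁ ≫ e = t₁ ∧ gl.i₂ ≫ e = t₂ ∧
      gl.Minimal ∧
      (∀ {Z' : C} (u v : gl.U ⟶ Z'), gl.i₁ ≫ u = gl.i₁ ≫ v → gl.i₂ ≫ u = gl.i₂ ≫ v → u = v) ∧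
      ∀ (V : C) (cV : V ⟶ T) (j₁ : X ⟶ V) (j₂ : Y ⟶ V), Mono cV → j₁ ≫ cV = t₁ →
        j₂ ≫ cV = t₂ → ∃ w : gl.U ⟶ V, w ≫ cV = e ∧ gl.i₁ ≫ w = j₁ ∧ gl.i₂ ≫ w = j₂ := by
  have hpb : IsPullback (pullback.fst t₁ t₂) (pullback.snd t₁ t₂) t₁ t₂ :=
    IsPullback.of_hasPullback t₁ t₂
  haveI ma : Mono (pullback.fst t₁ t₂) := mono_fst_of_isPullback hpb
  haveI mb : Mono (pullback.snd t₁ t₂) := mono_snd_of_isPullback hpb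
  haveI : HasPushout (pullback.fst t₁ t₂) (pullback.snd t₁ t₂) :=
    Adhesive.hasPushout_of_mono_left _ _
  set a := pullback.fst t₁ t₂
  set b := pullback.snd t₁ t₂
  have H : IsPushout a b (pushout.inl a b) (pushout.inr a b) := IsPushout.of_hasPushout a b
  haveI mc : Mono (pushout.inl a b) := Adhesive.mono_of_isPushout_of_mono_right H
  haveI md : Mono (pushout.inr a b) := Adhesive.mono_of_isPushout_of_mono_left H
  set e := pushout.desc t₁ t₂ pullback.condition with hedef
  have he₁ : pushout.inl a b ≫ e = t₁ := pushout.inl_desc _ _ _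
  have he₂ : pushout.inr a b ≫ e = t₂ := pushout.inr_desc _ _ _
  haveI me : Mono e := mono_union H hpb he₁ he₂
  refine ⟨⟨pushout a b, pushout.inl a b, pushout.inr a b, mc, md⟩, e, me, he₁, he₂, ?_, ?_, ?_⟩
  · -- minimality
    intro V m hm ⟨j₁, hj₁⟩ ⟨j₂, hj₂⟩
    dsimp only at hj₁ hj₂ ⊢
    have compat : a ≫ j₁ = b ≫ j₂ := by
      rw [← cancel_mono m, Category.assoc, Category.assoc, hj₁, hj₂, H.w]
    have hw : (H.desc j₁ j₂ compat) ≫ m = 𝟙 _ := by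
      refine H.hom_ext ?_ ?_
      · rw [← Category.assoc, H.inl_desc, hj₁, Category.comp_id]
      · rw [← Category.assoc, H.inr_desc, hj₂, Category.comp_id]
    haveI : IsSplitEpi m := IsSplitEpi.mk' ⟨H.desc j₁ j₂ compat, hw⟩
    exact isIso_of_mono_of_isSplitEpi m
  · -- jointly epic
    intro Z' u v h1 h2
    exact H.hom_ext h1 h2
  · -- domination
    intro V cV j₁ j₂ hm hj₁ hj₂
    have compat : a ≫ j₁ = b ≫ j₂ := by
      rw [← cancel_mono cV, Category.assoc, Category.assoc, hj₁, hj₂]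
      exact pullback.condition
    refine ⟨H.desc j₁ j₂ compat, ?_, H.inl_desc _ _ _, H.inr_desc _ _ _⟩
    refine H.hom_ext ?_ ?_
    · rw [← Category.assoc, H.inl_desc, hj₁, he₁]
    · rw [← Category.assoc, H.inr_desc, hj₂, he₂]

/-- The legs of a minimal gluing are jointly epic. -/
lemma minimal_jointEpi {X Y : C} (gl : Gluing X Y) (hgl : gl.Minimal) {Z' : C}
    (u v : gl.U ⟶ Z') (h1 : gl.i₁ ≫ u = gl.i₁ ≫ v) (h2 : gl.i₂ ≫ u = gl.i₂ ≫ v) : u = v := by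
  haveI := gl.mono₁
  haveI := gl.mono₂
  obtain ⟨gl', e, me, he₁, he₂, -, jointEpi, -⟩ := union_exists gl.i₁ gl.i₂
  haveI := me
  haveI : IsIso e := hgl gl'.U e me ⟨gl'.i₁, he₁⟩ ⟨gl'.i₂, he₂⟩
  have : e ≫ u = e ≫ v := by
    refine jointEpi _ _ ?_ ?_
    · rw [← Category.assoc, ← Category.assoc, he₁, h1]
    · rw [← Category.assoc, ← Category.assoc, he₂, h2]
  exact (cancel_epi e).mp this

end UnionPkg



section FPBC

variable [Adhesive C]

/-- The complement leg of an FPBC of monos is mono. -/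
lemma mono_fpbc {X Y Z W : C} {f₁ : X ⟶ Y} {f₂ : Y ⟶ Z} {g₁ : X ⟶ W} {g₂ : W ⟶ Z}
    (H : IsFPBC f₁ f₂ g₁ g₂) [Mono f₁] [Mono f₂] : Mono g₂ := by
  constructor
  intro T x y hxy
  have hpb : IsPullback (pullback.fst f₂ (x ≫ g₂)) (pullback.snd f₂ (x ≫ g₂)) f₂ (x ≫ g₂) :=
    IsPullback.of_hasPullback _ _
  have wx : pullback.fst f₂ (x ≫ g₂) ≫ f₂ = (pullback.snd f₂ (x ≫ g₂) ≫ x) ≫ g₂ := by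
    rw [hpb.w, Category.assoc]
  have wy : pullback.fst f₂ (x ≫ g₂) ≫ f₂ = (pullback.snd f₂ (x ≫ g₂) ≫ y) ≫ g₂ := by
    rw [hpb.w, Category.assoc]
    exact congrArg (pullback.snd f₂ (x ≫ g₂) ≫ ·) hxy
  set p := H.isPullback.lift _ _ wx with hp
  have hpf : p ≫ f₁ = pullback.fst f₂ (x ≫ g₂) := H.isPullback.lift_fst _ _ _
  have hpg : p ≫ g₁ = pullback.snd f₂ (x ≫ g₂) ≫ x := H.isPullback.lift_snd _ _ _
  have hpy : p ≫ g₁ = pullback.snd f₂ (x ≫ g₂) ≫ y := by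
    have : p = H.isPullback.lift _ _ wy := by
      rw [← cancel_mono f₁, hpf, H.isPullback.lift_fst]
    rw [this, H.isPullback.lift_snd]
  obtain ⟨u, -, huniq⟩ := H.final _ _ _ hpb p hpf
  have hx := huniq x ⟨rfl, hpg.symm⟩
  have hy := huniq y ⟨hxy.symm, hpy.symm⟩
  rw [hx, hy]

/-- FPBCs are unique up to a compatible isomorphism. -/
lemma fpbc_unique {X Y Z W W' : C} {f₁ : X ⟶ Y} {f₂ : Y ⟶ Z} {g₁ : X ⟶ W} {g₂ : W ⟶ Z}
    {k₁ : X ⟶ W'} {k₂ : W' ⟶ Z} (H : IsFPBC f₁ f₂ g₁ g₂) (H' : IsFPBC f₁ f₂ k₁ k₂) :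
    ∃ w : W ≅ W', w.hom ≫ k₂ = g₂ ∧ g₁ ≫ w.hom = k₁ ∧ w.inv ≫ g₂ = k₂ ∧ k₁ ≫ w.inv = g₁ := by
  obtain ⟨u, ⟨hu₁, hu₂⟩, -⟩ := H'.final f₁ g₁ g₂ H.isPullback (𝟙 X) (Category.id_comp _)
  obtain ⟨v, ⟨hv₁, hv₂⟩, -⟩ := H.final f₁ k₁ k₂ H'.isPullback (𝟙 X) (Category.id_comp _)
  obtain ⟨z, -, hz⟩ := H.final f₁ g₁ g₂ H.isPullback (𝟙 X) (Category.id_comp _)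
  obtain ⟨z', -, hz'⟩ := H'.final f₁ k₁ k₂ H'.isPullback (𝟙 X) (Category.id_comp _)
  have huv : u ≫ v = 𝟙 W := by
    have h1 := hz (u ≫ v) ⟨by rw [Category.assoc, hv₁, hu₁], by
      rw [← Category.assoc, hu₂, Category.id_comp, hv₂]⟩
    have h2 := hz (𝟙 W) ⟨Category.id_comp _, by rw [Category.comp_id, Category.id_comp]⟩
    rw [h1, h2]
  have hvu : v ≫ u = 𝟙 W' := by
    have h1 := hz' (v ≫ u) ⟨by rw [Category.assoc, hu₁, hv₁], by
      rw [← Category.assoc, hv₂, Category.id_comp, hu₂]⟩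
    have h2 := hz' (𝟙 W') ⟨Category.id_comp _, by rw [Category.comp_id, Category.id_comp]⟩
    rw [h1, h2]
  refine ⟨⟨u, v, huv, hvu⟩, hu₁, by rw [hu₂, Category.id_comp], hv₁, by
    rw [hv₂, Category.id_comp]⟩

/-- In an adhesive category, a pushout of monos is a final pullback complement
(sesqui-pushout rewriting, Corradini et al.). -/
lemma isFPBC_of_isPushout {W X Y Z : C} {a : W ⟶ X} {b : W ⟶ Y} {c : X ⟶ Z} {d : Y ⟶ Z}
    (H : IsPushout a b c d) [Mono a] [Mono b] : IsFPBC a c b d := by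
  haveI mc : Mono c := Adhesive.mono_of_isPushout_of_mono_right H
  haveI md : Mono d := Adhesive.mono_of_isPushout_of_mono_left H
  haveI mac : Mono (a ≫ c) := mono_comp _ _
  refine ⟨Adhesive.isPullback_of_isPushout_of_mono_left H, ?_⟩
  intro P Q f₁' g₁' g₂' hpb p hp
  have hpD : IsPullback (pullback.fst d g₂') (pullback.snd d g₂') d g₂' :=
    IsPullback.of_hasPullback d g₂'
  have hpK : IsPullback (pullback.fst (a ≫ c) g₂') (pullback.snd (a ≫ c) g₂') (a ≫ c) g₂' :=
    IsPullback.of_hasPullback _ _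
  have hpK' : IsPullback (pullback.fst (a ≫ c) g₂') (pullback.snd (a ≫ c) g₂') (b ≫ d) g₂' :=
    H.w ▸ hpK
  set u₁ := hpb.lift (pullback.fst (a ≫ c) g₂' ≫ a) (pullback.snd (a ≫ c) g₂')
    (by rw [Category.assoc, hpK.w]) with hu₁def
  set u₂ := hpD.lift (pullback.fst (a ≫ c) g₂' ≫ b) (pullback.snd (a ≫ c) g₂')
    (by rw [Category.assoc, hpK'.w]) with hu₂def
  have back1 : IsPullback u₁ (pullback.fst (a ≫ c) g₂') f₁' a :=
    isPullback_lift hpb hpK (hpb.lift_fst _ _ _) (hpb.lift_snd _ _ _)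
  have back2 : IsPullback u₂ (pullback.fst (a ≫ c) g₂') (pullback.fst d g₂') b :=
    isPullback_lift hpD hpK' (hpD.lift_fst _ _ _) (hpD.lift_snd _ _ _)
  have top : IsPushout u₁ u₂ g₁' (pullback.snd d g₂') :=
    (Adhesive.van_kampen H u₁ u₂ g₁' (pullback.snd d g₂') (pullback.fst (a ≫ c) g₂')
      f₁' (pullback.fst d g₂') g₂' back1 back2 ⟨hpb.w.symm⟩ ⟨hpD.w.symm⟩
      ⟨by rw [hpb.lift_snd, hpD.lift_snd]⟩).mpr ⟨hpb.flip, hpD.flip⟩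
  have hu₁p : u₁ ≫ p = pullback.fst (a ≫ c) g₂' := by
    rw [← cancel_mono a, Category.assoc, hp, hpb.lift_fst]
  have compat : u₁ ≫ (p ≫ b) = u₂ ≫ pullback.fst d g₂' := by
    rw [← Category.assoc, hu₁p, hpD.lift_fst]
  refine ⟨top.desc (p ≫ b) (pullback.fst d g₂') compat, ⟨?_, top.inl_desc _ _ _⟩, ?_⟩
  · refine top.hom_ext ?_ ?_
    · rw [← Category.assoc, top.inl_desc, Category.assoc, ← H.w, ← Category.assoc, hp, hpb.w]
    · rw [← Category.assoc, top.inr_desc, hpD.w]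
  · rintro u' ⟨h1, h2⟩
    refine top.hom_ext ?_ ?_
    · rw [top.inl_desc, h2]
    · rw [top.inr_desc, ← cancel_mono d, Category.assoc, h1, hpD.w]

/-- Restricting a pushout square along a mono `c` of the pushout object. -/
lemma restrict_pushout {K R D H U D' : C} {r : K ⟶ R} {hf : K ⟶ D}
    {af : R ⟶ H} {bt : D ⟶ H} {c : U ⟶ H} {m : R ⟶ U} {b' : D' ⟶ U} {q : D' ⟶ D} {k : K ⟶ D'}
    (po : IsPushout r hf af bt) [Mono r] [Mono c]
    (pb : IsPullback b' q c bt) (hm : m ≫ c = af) (hk1 : k ≫ q = hf) (hk2 : k ≫ b' = r ≫ m) :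
    IsPushout r k m b' := by
  haveI mq : Mono q := mono_snd_of_isPullback pb
  have back1 : IsPullback r (𝟙 K) (𝟙 R) r := IsPullback.of_vert_isIso ⟨by simp⟩
  have back2 : IsPullback k (𝟙 K) q hf := isPullback_id_of_mono' k q hf hk1
  have front1 : IsPullback m (𝟙 R) c af := isPullback_id_of_mono' m c af hm
  exact (Adhesive.van_kampen po r k m b' (𝟙 K) (𝟙 R) q c back1 back2
    ⟨by rw [Category.id_comp, hm]⟩ ⟨pb.w⟩ ⟨hk2.symm⟩).mpr ⟨front1, pb⟩

end FPBC



section Classify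

variable [Adhesive C]

/-- Classification of matches `F ⟶ H₀` relative to a mono `r : R ⟶ H₀`, by
minimal gluings of `R` and `F`: the map `(i, c) ↦ (M i).i₂ ≫ c` is bijective. -/
lemma classify_gluings {R F H₀ : C} {ι : Type} (M : ι → Gluing R F)
    (hmin : ∀ i, (M i).Minimal)
    (hrep : ∀ gl : Gluing R F, gl.Minimal → ∃! i : ι, GluingIso gl (M i))
    (r : R ⟶ H₀) [Mono r] :
    Function.Bijective
      (fun p : Σ i : ι, {c : (M i).U ⟶ H₀ // Mono c ∧ (M i).i₁ ≫ c = r} =>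
        (⟨(M p.1).i₂ ≫ p.2.1,
          @mono_comp C _ _ _ _ ((M p.1).i₂) (M p.1).mono₂ (p.2.1) p.2.2.1⟩ : Mchs F H₀)) := by
  constructor
  · rintro ⟨i, c, mc, hc⟩ ⟨i', c', mc', hc'⟩ hval
    simp only [Subtype.mk.injEq] at hval
    -- hval : (M i).i₂ ≫ c = (M i').i₂ ≫ c'
    haveI := (M i).mono₁; haveI := (M i).mono₂; haveI := (M i').mono₁; haveI := (M i').mono₂
    haveI := mc; haveI := mc'
    haveI : Mono ((M i).i₂ ≫ c) := mono_comp _ _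
    obtain ⟨gl, e, me, he₁, he₂, -, -, dom⟩ := union_exists r ((M i).i₂ ≫ c)
    obtain ⟨w, hwc, hw1, hw2⟩ := dom (M i).U c (M i).i₁ (M i).i₂ mc hc rfl
    obtain ⟨w', hwc', hw1', hw2'⟩ := dom (M i').U c' (M i').i₁ (M i').i₂ mc' hc' hval.symm
    haveI mw : Mono w := by
      haveI : Mono (w ≫ c) := by rw [hwc]; exact me
      exact mono_of_mono w c
    haveI mw' : Mono w' := by
      haveI : Mono (w' ≫ c') := by rw [hwc']; exact me
      exact mono_of_mono w' c'
    haveI : IsIso w := hmin i gl.U w mw ⟨gl.i₁, hw1⟩ ⟨gl.i₂, hw2⟩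
    haveI : IsIso w' := hmin i' gl.U w' mw' ⟨gl.i₁, hw1'⟩ ⟨gl.i₂, hw2'⟩
    have giso : GluingIso (M i) (M i') := by
      refine ⟨(asIso w).symm ≪≫ asIso w', ?_, ?_⟩
      · show (M i).i₁ ≫ inv w ≫ w' = (M i').i₁
        rw [← hw1]
        simp [hw1']
      · show (M i).i₂ ≫ inv w ≫ w' = (M i').i₂
        rw [← hw2]
        simp [hw2']
    obtain ⟨j, -, huniq⟩ := hrep (M i) (hmin i)
    have hii' : i = i' := by
      rw [huniq i ⟨Iso.refl _, by simp, by simp⟩, huniq i' giso]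
    subst hii'
    have hcc' : c = c' := by
      refine minimal_jointEpi (M i) (hmin i) c c' ?_ hval
      rw [hc, hc']
    subst hcc'
    rfl
  · rintro ⟨m, hm⟩
    haveI := hm
    obtain ⟨gl, e, me, he₁, he₂, hglmin, -, -⟩ := union_exists r m
    obtain ⟨i, ⟨u, hu1, hu2⟩, -⟩ := hrep gl hglmin
    haveI := me
    haveI : Mono u.inv := inferInstance
    refine ⟨⟨i, u.inv ≫ e, mono_comp _ _, ?_⟩, ?_⟩
    · rw [← hu1]
      simp [he₁]
    · apply Subtype.ext
      show (M i).i₂ ≫ u.inv ≫ e = m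
      rw [← hu2]
      simp [he₂]

end Classify


section PerI

variable [Adhesive C]

/-- For a fixed minimal gluing `gl` (with derivable first leg and chosen reverse
derivation producing `dS : L ⟶ S`), matches `S ⟶ G` correspond bijectively to pairs of a
match `f : L ⟶ G` and an embedding of the gluing into the chosen result `Hf f`. -/
lemma per_i {L R G S : C} {F : C} (α : Rule L R) (gl : Gluing R F)
    (dS : L ⟶ S) (hdm : Mono dS) (γ : Rule gl.U S)
    (hγ : IsDerivation α.rev gl.i₁ dS γ) (hder : Derivable α gl.i₁)
    {Hf : Mchs L G → C} (af : ∀ f : Mchs L G, R ⟶ Hf f) (monoaf : ∀ f, Mono (af f))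
    (β : ∀ f : Mchs L G, Rule G (Hf f)) (hβ : ∀ f, IsDerivation α f.1 (af f) (β f)) :
    ∃ Θ : Mchs S G → Σ f : Mchs L G, {c : gl.U ⟶ Hf f // Mono c ∧ gl.i₁ ≫ c = af f},
      Function.Bijective Θ := by
  classical
  haveI := α.mono_right
  haveI := α.mono_left
  haveI := gl.mono₁
  haveI := γ.mono_left
  haveI := γ.mono_right
  haveI := hdm
  change ∃ h : α.K ⟶ γ.K, Mono h ∧ IsFPBC α.right gl.i₁ h γ.left ∧
    IsPushout α.left h dS γ.right at hγ
  obtain ⟨k₀, hk₀m, hFPBC₀, hPO₀⟩ := hγ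
  haveI := hk₀m
  have hFPBC₀ : IsFPBC α.right gl.i₁ k₀ γ.left := hFPBC₀
  have hPO₀ : IsPushout α.left k₀ dS γ.right := hPO₀
  choose hmap hprop using hβ
  have hmapm : ∀ f, Mono (hmap f) := fun f => (hprop f).1
  have hFPBCf : ∀ f, IsFPBC α.left f.1 (hmap f) (β f).left := fun f => (hprop f).2.1
  have hPOf : ∀ f, IsPushout α.right (hmap f) (af f) (β f).right := fun f => (hprop f).2.2
  have PO_i : IsPushout α.right k₀ gl.i₁ γ.left := by
    obtain ⟨G₀, f₀, β₀, hf₀, h₀, h₀m, hFPBC₀', hPO₀'⟩ := hder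
    haveI := h₀m
    have F1 : IsFPBC α.right gl.i₁ h₀ β₀.right := isFPBC_of_isPushout hPO₀'
    obtain ⟨w₀, hwa, hwb, hwc, hwd⟩ := fpbc_unique F1 hFPBC₀
    have t : IsPushout β₀.right w₀.hom (𝟙 gl.U) γ.left :=
      IsPushout.of_vert_isIso ⟨by rw [Category.comp_id, hwa]⟩
    have hres := hPO₀'.paste_vert t
    rwa [hwb, Category.comp_id] at hres
  have hex : ∀ (n : Mchs S G) (f : Mchs L G), f.1 = dS ≫ n.1 →
      ∃! u : γ.K ⟶ (β f).K, u ≫ (β f).left = γ.right ≫ n.1 ∧ k₀ ≫ u = hmap f := by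
    intro n f hf1
    haveI := n.2
    have pbsq : IsPullback α.left k₀ f.1 (γ.right ≫ n.1) := by
      rw [hf1]
      exact IsPullback.comp_mono (Adhesive.isPullback_of_isPushout_of_mono_left hPO₀) n.1
    have h := (hFPBCf f).final α.left k₀ (γ.right ≫ n.1) pbsq (𝟙 _) (Category.id_comp _)
    simpa using h
  set Pr : Mchs S G → (Σ f : Mchs L G, {c : gl.U ⟶ Hf f // Mono c ∧ gl.i₁ ≫ c = af f}) → Prop :=
    fun n fc => fc.1.1 = dS ≫ n.1 ∧ ∃ u : γ.K ⟶ (β fc.1).K,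
      u ≫ (β fc.1).left = γ.right ≫ n.1 ∧ k₀ ≫ u = hmap fc.1 ∧
      γ.left ≫ fc.2.1 = u ≫ (β fc.1).right with hPrdef
  have tot : ∀ n, ∃ fc, Pr n fc := by
    intro n
    haveI := n.2
    set f : Mchs L G := ⟨dS ≫ n.1, mono_comp _ _⟩ with hfdef
    obtain ⟨u, ⟨hu1, hu2⟩, -⟩ := hex n f rfl
    have compat : α.right ≫ af f = k₀ ≫ u ≫ (β f).right := by
      rw [← Category.assoc, hu2, (hPOf f).w]
    set v := PO_i.desc (af f) (u ≫ (β f).right) compat with hvdef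
    have hv1 : gl.i₁ ≫ v = af f := PO_i.inl_desc _ _ _
    have hv2 : γ.left ≫ v = u ≫ (β f).right := PO_i.inr_desc _ _ _
    haveI mu : Mono u := by
      haveI : Mono (u ≫ (β f).left) := by
        rw [hu1]; exact mono_comp _ _
      exact mono_of_mono u (β f).left
    have bot : IsPushout γ.left u v (β f).right := by
      have big : IsPushout α.right (k₀ ≫ u) (gl.i₁ ≫ v) (β f).right := by
        rw [hu2, hv1]; exact hPOf f
      exact IsPushout.of_top big hv2 PO_i
    haveI mv : Mono v := Adhesive.mono_of_isPushout_of_mono_right bot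
    exact ⟨⟨f, v, mv, hv1⟩, rfl, u, hu1, hu2, hv2⟩
  have funl : ∀ n fc fc', Pr n fc → Pr n fc' → fc = fc' := by
    rintro n ⟨f, c, mc, hc⟩ ⟨f', c', mc', hc'⟩ ⟨e₁, u, hu1, hu2, hu3⟩ ⟨e₂, u', hu1', hu2', hu3'⟩
    obtain rfl : f = f' := Subtype.ext (by rw [e₁, e₂])
    obtain ⟨uu, -, huniq⟩ := hex n f e₁
    have huu' : u = u' := by rw [huniq u ⟨hu1, hu2⟩, huniq u' ⟨hu1', hu2'⟩]
    have hcc : c = c' := PO_i.hom_ext (by rw [hc, hc']) (by rw [hu3, hu3', huu'])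
    subst hcc
    rfl
  have inj : ∀ n n' fc, Pr n fc → Pr n' fc → n = n' := by
    rintro n n' ⟨f, c, mc, hc⟩ ⟨e₁, u, hu1, hu2, hu3⟩ ⟨e₂, u', hu1', hu2', hu3'⟩
    haveI := (β f).mono_right
    have huu' : u = u' := by
      rw [← cancel_mono (β f).right, ← hu3, ← hu3']
    apply Subtype.ext
    refine hPO₀.hom_ext ?_ ?_
    · rw [← e₁, ← e₂]
    · rw [← hu1, ← hu1', huu']
  have surj : ∀ fc, ∃ n, Pr n fc := by
    rintro ⟨f, c, mc, hc⟩
    haveI := mc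
    haveI := f.2
    haveI := (β f).mono_left
    haveI := (β f).mono_right
    haveI := hmapm f
    have pbD : IsPullback (pullback.fst c (β f).right) (pullback.snd c (β f).right) c
        (β f).right := IsPullback.of_hasPullback _ _
    have wk : (α.right ≫ gl.i₁) ≫ c = hmap f ≫ (β f).right := by
      rw [Category.assoc, hc, (hPOf f).w]
    set k := pbD.lift (α.right ≫ gl.i₁) (hmap f) wk with hkdef
    have hk1 : k ≫ pullback.fst c (β f).right = α.right ≫ gl.i₁ := pbD.lift_fst _ _ _
    have hk2 : k ≫ pullback.snd c (β f).right = hmap f := pbD.lift_snd _ _ _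
    have top : IsPushout α.right k gl.i₁ (pullback.fst c (β f).right) :=
      restrict_pushout (hPOf f) pbD hc hk2 hk1
    haveI mk : Mono k := by
      haveI : Mono (k ≫ pullback.snd c (β f).right) := by rw [hk2]; exact hmapm f
      exact mono_of_mono k (pullback.snd c (β f).right)
    have F2 : IsFPBC α.right gl.i₁ k (pullback.fst c (β f).right) := isFPBC_of_isPushout top
    obtain ⟨w, hwa, hwb, hwc, hwd⟩ := fpbc_unique F2 hFPBC₀
    haveI mq : Mono (pullback.snd c (β f).right) := mono_snd_of_isPullback pbD
    haveI : Mono (w.inv ≫ pullback.snd c (β f).right) := mono_comp _ _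
    have hk₀w : k₀ ≫ w.inv ≫ pullback.snd c (β f).right = hmap f := by
      rw [← Category.assoc, hwd, hk2]
    have compat : α.left ≫ f.1 = k₀ ≫ w.inv ≫ pullback.snd c (β f).right ≫ (β f).left := by
      have h0 : α.left ≫ f.1 = hmap f ≫ (β f).left := (hFPBCf f).isPullback.w
      rw [h0, ← hk₀w]
      simp only [Category.assoc]
    set n₀ := hPO₀.desc f.1 (w.inv ≫ pullback.snd c (β f).right ≫ (β f).left) compat with hn₀def
    have hn1 : dS ≫ n₀ = f.1 := hPO₀.inl_desc _ _ _
    have hn2 : γ.right ≫ n₀ = w.inv ≫ pullback.snd c (β f).right ≫ (β f).left :=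
      hPO₀.inr_desc _ _ _
    haveI : Mono (w.inv ≫ pullback.snd c (β f).right ≫ (β f).left) := by
      haveI : Mono (pullback.snd c (β f).right ≫ (β f).left) := mono_comp _ _
      exact mono_comp _ _
    have hpb2 : IsPullback α.left k₀ f.1 (w.inv ≫ pullback.snd c (β f).right ≫ (β f).left) := by
      have base : IsPullback α.left (k₀ ≫ (w.inv ≫ pullback.snd c (β f).right)) f.1
          (β f).left := by
        rw [show k₀ ≫ (w.inv ≫ pullback.snd c (β f).right) = hmap f from by
          rw [← Category.assoc, hwd, hk2]]
        exact (hFPBCf f).isPullback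
      have := IsPullback.cancel_comp base
      rwa [Category.assoc] at this
    have mono_n : Mono n₀ := mono_union hPO₀ hpb2 hn1 hn2
    refine ⟨⟨n₀, mono_n⟩, hn1.symm, w.inv ≫ pullback.snd c (β f).right, ?_, hk₀w, ?_⟩
    · rw [hn2]
      simp only [Category.assoc]
    · rw [← hwc, Category.assoc, pbD.w, ← Category.assoc]
  choose Θ hΘ using tot
  refine ⟨Θ, fun n n' h => inj n n' (Θ n) (hΘ n) (h ▸ hΘ n'), fun fc => ?_⟩
  obtain ⟨n, hn⟩ := surj fc
  exact ⟨n, funl n (Θ n) fc (hΘ n) hn⟩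

end PerI

section Restrict

variable [Adhesive C]

/-- If a comatch `g` factors through a mono `c` via `m`, and `g` is the comatch of a
derivation, then `m` is itself derivable. -/
lemma derivable_of_restrict {L R G' H U : C} (α : Rule L R) (f : L ⟶ G') (g : R ⟶ H)
    (β : Rule G' H) (hf : Mono f) (hder : IsDerivation α f g β) (m : R ⟶ U) (c : U ⟶ H)
    (hm : Mono m) (hc : Mono c) (hmc : m ≫ c = g) : Derivable α m := by
  obtain ⟨hmap, hmm, FPBC1, PO2⟩ := hder
  haveI := α.mono_left
  haveI := α.mono_right
  haveI := β.mono_right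
  haveI := hc
  haveI := hm
  haveI := hmm
  have pbD : IsPullback (pullback.fst c β.right) (pullback.snd c β.right) c β.right :=
    IsPullback.of_hasPullback _ _
  have wk : (α.right ≫ m) ≫ c = hmap ≫ β.right := by
    rw [Category.assoc, hmc, PO2.w]
  set k := pbD.lift (α.right ≫ m) hmap wk with hkdef
  have hk1 : k ≫ pullback.fst c β.right = α.right ≫ m := pbD.lift_fst _ _ _
  have hk2 : k ≫ pullback.snd c β.right = hmap := pbD.lift_snd _ _ _
  have top : IsPushout α.right k m (pullback.fst c β.right) :=
    restrict_pushout PO2 pbD hmc hk2 hk1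
  haveI mk : Mono k := by
    haveI : Mono (k ≫ pullback.snd c β.right) := by rw [hk2]; exact hmm
    exact mono_of_mono k (pullback.snd c β.right)
  haveI : HasPushout α.left k := Adhesive.hasPushout_of_mono_left _ _
  have po3 : IsPushout α.left k (pushout.inl α.left k) (pushout.inr α.left k) :=
    IsPushout.of_hasPushout _ _
  have FPBC3 : IsFPBC α.left (pushout.inl α.left k) k (pushout.inr α.left k) :=
    isFPBC_of_isPushout po3
  haveI minl : Mono (pushout.inl α.left k) := Adhesive.mono_of_isPushout_of_mono_right po3
  haveI minr : Mono (pushout.inr α.left k) := Adhesive.mono_of_isPushout_of_mono_left po3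
  haveI mfst : Mono (pullback.fst c β.right) := mono_fst_of_isPullback pbD
  exact ⟨pushout α.left k, pushout.inl α.left k,
    ⟨pullback c β.right, pushout.inr α.left k, pullback.fst c β.right, minr, mfst⟩,
    minl, k, mk, FPBC3, top⟩

end Restrict

end ProdTerm

open ProdTerm in
open scoped Classical in
/-- The production term of the rate matrix. -/
theorem production_term [Adhesive C]
    (hFPBC : ∀ {X Y Z : C} (f₁ : X ⟶ Y) (f₂ : Y ⟶ Z), Mono f₁ → Mono f₂ →
      ∃ (W : C) (g₁ : X ⟶ W) (g₂ : W ⟶ Z), IsFPBC f₁ f₂ g₁ g₂)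
    {L R F G : C} (α : Rule L R)
    {ι : Type} [Fintype ι] (M : ι → Gluing R F)
    (hmin : ∀ i, (M i).Minimal)
    (hrep : ∀ gl : Gluing R F, gl.Minimal → ∃! i : ι, GluingIso gl (M i))
    (S : ∀ i : ι, Derivable α (M i).i₁ → C)
    (d : ∀ (i : ι) (h : Derivable α (M i).i₁), L ⟶ S i h)
    (hd : ∀ (i : ι) (h : Derivable α (M i).i₁),
      Mono (d i h) ∧ ∃ γ : Rule (M i).U (S i h), IsDerivation α.rev (M i).i₁ (d i h) γ)
    [Fintype (Mchs L G)]
    (Hf : Mchs L G → C)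
    (af : ∀ f : Mchs L G, R ⟶ Hf f)
    (haf : ∀ f : Mchs L G, Mono (af f) ∧ ∃ β : Rule G (Hf f), IsDerivation α f.1 (af f) β)
    (hfin1 : ∀ f : Mchs L G, Finite (Mchs F (Hf f)))
    (hfin2 : ∀ (i : ι) (h : Derivable α (M i).i₁), Finite (Mchs (S i h) G)) :
    ∑ f : Mchs L G, Nat.card (Mchs F (Hf f)) =
      ∑ i : ι, (if h : Derivable α (M i).i₁ then Nat.card (Mchs (S i h) G) else 0) := by
  classical
  have monoaf : ∀ f, Mono (af f) := fun f => (haf f).1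
  choose β hβ using fun f => (haf f).2
  have finC : ∀ (f : Mchs L G) (i : ι),
      Finite {c : (M i).U ⟶ Hf f // Mono c ∧ (M i).i₁ ≫ c = af f} := by
    intro f i
    haveI := hfin1 f
    haveI := monoaf f
    have hbij := classify_gluings M hmin hrep (af f)
    refine Finite.of_injective
      (fun c => (⟨(M i).i₂ ≫ c.1,
        @mono_comp C _ _ _ _ ((M i).i₂) (M i).mono₂ (c.1) c.2.1⟩ : Mchs F (Hf f))) ?_
    intro c c' hcc
    have h2 := hbij.1 (a₁ := ⟨i, c⟩) (a₂ := ⟨i, c'⟩) hcc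
    exact eq_of_heq (Sigma.mk.inj_iff.mp h2).2
  haveI instC : ∀ (f : Mchs L G) (i : ι),
      Fintype {c : (M i).U ⟶ Hf f // Mono c ∧ (M i).i₁ ≫ c = af f} := by
    intro f i
    haveI := finC f i
    exact Fintype.ofFinite _
  have step1 : ∀ f : Mchs L G, Nat.card (Mchs F (Hf f)) =
      ∑ i : ι, Nat.card {c : (M i).U ⟶ Hf f // Mono c ∧ (M i).i₁ ≫ c = af f} := by
    intro f
    haveI := monoaf f
    haveI := hfin1 f
    have hbij := classify_gluings M hmin hrep (af f)
    have e1 : Nat.card (Σ i : ι, {c : (M i).U ⟶ Hf f // Mono c ∧ (M i).i₁ ≫ c = af f}) =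
        Nat.card (Mchs F (Hf f)) := Nat.card_eq_of_bijective _ hbij
    rw [← e1, Nat.card_eq_fintype_card, Fintype.card_sigma]
    exact Finset.sum_congr rfl fun i _ => (Nat.card_eq_fintype_card).symm
  have step2 : ∀ i : ι, (if h : Derivable α (M i).i₁ then Nat.card (Mchs (S i h) G) else 0) =
      ∑ f : Mchs L G, Nat.card {c : (M i).U ⟶ Hf f // Mono c ∧ (M i).i₁ ≫ c = af f} := by
    intro i
    by_cases h : Derivable α (M i).i₁
    · rw [dif_pos h]
      obtain ⟨γ, hγ⟩ := (hd i h).2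
      obtain ⟨Θ, hΘ⟩ := per_i α (M i) (d i h) (hd i h).1 γ hγ h af monoaf β hβ
      have e2 : Nat.card (Mchs (S i h) G) =
          Nat.card (Σ f : Mchs L G, {c : (M i).U ⟶ Hf f // Mono c ∧ (M i).i₁ ≫ c = af f}) :=
        Nat.card_eq_of_bijective Θ hΘ
      rw [e2, Nat.card_eq_fintype_card, Fintype.card_sigma]
      exact Finset.sum_congr rfl fun f _ => (Nat.card_eq_fintype_card).symm
    · rw [dif_neg h]
      symm
      refine Finset.sum_eq_zero fun f _ => ?_
      haveI : IsEmpty {c : (M i).U ⟶ Hf f // Mono c ∧ (M i).i₁ ≫ c = af f} := by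
        constructor
        rintro ⟨c, mc, hc⟩
        exact h (derivable_of_restrict α f.1 (af f) (β f) f.2 (hβ f) (M i).i₁ c
          (M i).mono₁ mc hc)
      exact Nat.card_of_isEmpty
  calc ∑ f : Mchs L G, Nat.card (Mchs F (Hf f))
      = ∑ f : Mchs L G, ∑ i : ι,
          Nat.card {c : (M i).U ⟶ Hf f // Mono c ∧ (M i).i₁ ≫ c = af f} :=
        Finset.sum_congr rfl fun f _ => step1 f
    _ = ∑ i : ι, ∑ f : Mchs L G,
          Nat.card {c : (M i).U ⟶ Hf f // Mono c ∧ (M i).i₁ ≫ c = af f} := Finset.sum_comm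
    _ = ∑ i : ι, (if h : Derivable α (M i).i₁ then Nat.card (Mchs (S i h) G) else 0) :=
        (Finset.sum_congr rfl fun i _ => (step2 i).symm)
end
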